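/- arXiv:1711.07734 — 7 statements merged into one kernel-verified Lean document; each statement's English description precedes it below -/
import Mathlib

section
/- Let k₁ ≥ k₂ ≥ 3 be integers and let n₁, n₂ be nonnegative integers with n₁ ≥ k₁. Then [n₁, k₁+k₂, k₂] + [n₂, k₂, k₂] ≤ [n₁+n₂, k₁+k₂, k₂]. -/
/-- The quantity `[n, m, ℓ]` of the paper: writing `n = (m-1) + t(ℓ-1) + r` with
`t ≥ 0`, `0 ≤ r < ℓ-1`, it equals `C(m-1,2) + t·C(ℓ-1,2) + C(r,2)`;
if `n ≤ m-1` it equals `C(n,2)`. -/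
def bracket (n m ℓ : ℕ) : ℕ :=
  if n ≤ m - 1 then n.choose 2
  else (m - 1).choose 2 + ((n - (m - 1)) / (ℓ - 1)) * (ℓ - 1).choose 2
    + ((n - (m - 1)) % (ℓ - 1)).choose 2

/-- Auxiliary function: `g L x = (x/L)·C(L,2) + C(x%L,2)`. -/
def g (L x : ℕ) : ℕ := x / L * L.choose 2 + (x % L).choose 2

lemma choose_succ (n : ℕ) : (n + 1).choose 2 = n.choose 2 + n := by
  simp [Nat.choose_succ_succ, Nat.choose_one_right, Nat.add_comm]

lemma two_choose (n : ℕ) : 2 * n.choose 2 + n = n * n := by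
  induction n with
  | zero => rfl
  | succ n ih => rw [choose_succ]; nlinarith [ih]

lemma chooseA (a b : ℕ) : a.choose 2 + b.choose 2 ≤ (a + b).choose 2 := by
  nlinarith [two_choose a, two_choose b, two_choose (a + b)]

lemma chooseB (a b c d : ℕ) (hac : a ≤ c) (hbc : b ≤ c) (h : a + b = c + d) :
    a.choose 2 + b.choose 2 ≤ c.choose 2 + d.choose 2 := by
  have h1 := two_choose a
  have h2 := two_choose b
  have h3 := two_choose c
  have h4 := two_choose d
  zify at *
  nlinarith [mul_nonneg (by linarith : (0:ℤ) ≤ (c:ℤ) - a) (by linarith : (0:ℤ) ≤ (c:ℤ) - b)]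

lemma g_eval (L q r : ℕ) (hr : r < L) : g L (q * L + r) = q * L.choose 2 + r.choose 2 := by
  have hL : 0 < L := lt_of_le_of_lt (Nat.zero_le r) hr
  rw [g, mul_comm q L, Nat.mul_add_div hL, Nat.mul_add_mod,
    Nat.div_eq_of_lt hr, Nat.mod_eq_of_lt hr, Nat.add_zero]

lemma g_superadd (L a b : ℕ) (hL : 0 < L) : g L a + g L b ≤ g L (a + b) := by
  obtain ⟨q₁, r₁, hr₁, rfl⟩ : ∃ q r, r < L ∧ a = q * L + r :=
    ⟨a / L, a % L, Nat.mod_lt _ hL, (Nat.div_add_mod' a L).symm⟩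
  obtain ⟨q₂, r₂, hr₂, rfl⟩ : ∃ q r, r < L ∧ b = q * L + r :=
    ⟨b / L, b % L, Nat.mod_lt _ hL, (Nat.div_add_mod' b L).symm⟩
  rw [g_eval L q₁ r₁ hr₁, g_eval L q₂ r₂ hr₂]
  by_cases h : r₁ + r₂ < L
  · have e : q₁ * L + r₁ + (q₂ * L + r₂) = (q₁ + q₂) * L + (r₁ + r₂) := by ring
    rw [e, g_eval L _ _ h, add_mul]
    have := chooseA r₁ r₂
    omega
  · have e : q₁ * L + r₁ + (q₂ * L + r₂) = (q₁ + q₂ + 1) * L + (r₁ + r₂ - L) := by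
      rw [add_mul, add_mul, one_mul]; omega
    rw [e, g_eval L _ _ (by omega), add_mul, add_mul, one_mul]
    have := chooseB r₁ r₂ L (r₁ + r₂ - L) (le_of_lt hr₁) (le_of_lt hr₂) (by omega)
    omega

lemma g_small (L n : ℕ) (hL : 0 < L) (h : n ≤ L) : g L n = n.choose 2 := by
  rcases eq_or_lt_of_le h with rfl | h
  · have h1 := g_eval n 1 0 hL
    simpa using h1
  · have h1 := g_eval L 0 n h
    simpa using h1

lemma choose_add_mul (n d : ℕ) : n.choose 2 + d * n ≤ (n + d).choose 2 := by
  induction d with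
  | zero => simp
  | succ d ih =>
    have e : n + (d + 1) = (n + d) + 1 := by ring
    rw [e, choose_succ]
    nlinarith

lemma g_add_le (L x d : ℕ) (hL : 2 ≤ L) : g L (x + d) ≤ g L x + d * (L - 1) := by
  induction d with
  | zero => simp
  | succ d ih =>
    have step : ∀ y, g L (y + 1) ≤ g L y + (L - 1) := by
      intro y
      obtain ⟨q, r, hr, rfl⟩ : ∃ q r, r < L ∧ y = q * L + r :=
        ⟨y / L, y % L, Nat.mod_lt _ (by omega), (Nat.div_add_mod' y L).symm⟩
      rw [g_eval L q r hr]
      by_cases h : r + 1 < L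
      · have e : q * L + r + 1 = q * L + (r + 1) := by ring
        rw [e, g_eval L q _ h, choose_succ]
        omega
      · have hrL : r + 1 = L := by omega
        have e : q * L + r + 1 = (q + 1) * L + 0 := by
          rw [add_mul, one_mul]; omega
        rw [e, g_eval L _ 0 (by omega), add_mul, one_mul]
        have hc : L.choose 2 = r.choose 2 + r := by rw [← hrL, choose_succ]
        rw [hc]
        simp [Nat.choose]
        omega
    calc g L (x + (d + 1)) = g L ((x + d) + 1) := by ring_nf
    _ ≤ g L (x + d) + (L - 1) := step _
    _ ≤ g L x + d * (L - 1) + (L - 1) := by omega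
    _ = g L x + (d + 1) * (L - 1) := by ring

lemma bracket_self (n ℓ : ℕ) (hℓ : 3 ≤ ℓ) : bracket n ℓ ℓ = g (ℓ - 1) n := by
  have hL : 0 < ℓ - 1 := by omega
  by_cases h : n ≤ ℓ - 1
  · rw [bracket, if_pos h, g_small _ n hL h]
  · rw [bracket, if_neg h, g]
    have hn : n = (n - (ℓ - 1)) + (ℓ - 1) := by omega
    conv_rhs => rw [hn]
    rw [Nat.add_div_right _ hL, Nat.add_mod_right, add_mul, one_mul]
    ring

lemma bracket_big (n m ℓ : ℕ) (h : m - 1 < n) :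
    bracket n m ℓ = (m - 1).choose 2 + g (ℓ - 1) (n - (m - 1)) := by
  rw [bracket, if_neg (by omega), g]
  ring

/-- If `k₁ ≥ k₂ ≥ 3` and `n₁ ≥ k₁`, then
`[n₁, k₁+k₂, k₂] + [n₂, k₂, k₂] ≤ [n₁+n₂, k₁+k₂, k₂]`. -/
theorem stmt4 (k₁ k₂ n₁ n₂ : ℕ) (hk₂ : 3 ≤ k₂) (hk : k₂ ≤ k₁) (hn₁ : k₁ ≤ n₁) :
    bracket n₁ (k₁ + k₂) k₂ + bracket n₂ k₂ k₂ ≤ bracket (n₁ + n₂) (k₁ + k₂) k₂ := by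
  have hL : 2 ≤ k₂ - 1 := by omega
  rw [bracket_self n₂ k₂ hk₂]
  by_cases h1 : n₁ ≤ k₁ + k₂ - 1
  · by_cases h2 : n₁ + n₂ ≤ k₁ + k₂ - 1
    · rw [bracket, if_pos h1, bracket, if_pos h2,
        g_small (k₂ - 1) n₂ (by omega) (by omega)]
      exact chooseA n₁ n₂
    · rw [bracket, if_pos h1, bracket_big (n₁ + n₂) (k₁ + k₂) k₂ (by omega)]
      have key1 := g_add_le (k₂ - 1) (n₁ + n₂ - (k₁ + k₂ - 1)) ((k₁ + k₂ - 1) - n₁) hL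
      have key2 := choose_add_mul n₁ ((k₁ + k₂ - 1) - n₁)
      have key3 : ((k₁ + k₂ - 1) - n₁) * (k₂ - 1 - 1) ≤ ((k₁ + k₂ - 1) - n₁) * n₁ :=
        Nat.mul_le_mul_left _ (by omega)
      rw [show (n₁ + n₂ - (k₁ + k₂ - 1)) + ((k₁ + k₂ - 1) - n₁) = n₂ from by omega] at key1
      rw [show n₁ + ((k₁ + k₂ - 1) - n₁) = k₁ + k₂ - 1 from by omega] at key2
      omega
  · rw [bracket_big n₁ (k₁ + k₂) k₂ (by omega),
      bracket_big (n₁ + n₂) (k₁ + k₂) k₂ (by omega),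
      show n₁ + n₂ - (k₁ + k₂ - 1) = (n₁ - (k₁ + k₂ - 1)) + n₂ from by omega]
    have := g_superadd (k₂ - 1) (n₁ - (k₁ + k₂ - 1)) n₂ (by omega)
    omega
end

section
/- Let k₁ ≥ k₂ ≥ 3 be integers, let s = ⌊k₁/2⌋ + ⌊k₂/2⌋, and let n₁, n₂ be nonnegative integers with n₁ ≥ k₁ + k₂ and n₂ ≥ 1. Then [n₁, s] + [n₂, k₂, k₂] < [n₁+n₂, s]. -/
lemma bracket_bound (n k : ℕ) (hk : 3 ≤ k) : 2 * bracket n k k ≤ n * (k - 2) := by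
  unfold bracket
  split_ifs with h
  · calc 2 * n.choose 2 = n * (n - 1) / 2 * 2 := by rw [Nat.choose_two_right]; ring
      _ ≤ n * (n - 1) := Nat.div_mul_le_self _ 2
      _ ≤ n * (k - 2) := Nat.mul_le_mul_left n (by omega)
  · set q := (n - (k - 1)) / (k - 1) with hq
    set r := (n - (k - 1)) % (k - 1) with hr
    have hdm : (k - 1) * q + r = n - (k - 1) := Nat.div_add_mod (n - (k - 1)) (k - 1)
    have hrlt : r < k - 1 := Nat.mod_lt _ (by omega)
    have hn : n = (k - 1) + (k - 1) * q + r := by omega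
    have e1 : 2 * (k - 1).choose 2 ≤ (k - 1) * (k - 2) := by
      calc 2 * (k - 1).choose 2 = (k - 1) * (k - 1 - 1) / 2 * 2 := by
            rw [Nat.choose_two_right]; ring
        _ ≤ (k - 1) * (k - 1 - 1) := Nat.div_mul_le_self _ 2
        _ ≤ (k - 1) * (k - 2) := Nat.mul_le_mul_left _ (by omega)
    have e2 : 2 * r.choose 2 ≤ r * (k - 2) := by
      calc 2 * r.choose 2 = r * (r - 1) / 2 * 2 := by rw [Nat.choose_two_right]; ring
        _ ≤ r * (r - 1) := Nat.div_mul_le_self _ 2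
        _ ≤ r * (k - 2) := Nat.mul_le_mul_left _ (by omega)
    calc 2 * ((k - 1).choose 2 + q * (k - 1).choose 2 + r.choose 2)
        = 2 * (k - 1).choose 2 + q * (2 * (k - 1).choose 2) + 2 * r.choose 2 := by ring
      _ ≤ (k - 1) * (k - 2) + q * ((k - 1) * (k - 2)) + r * (k - 2) := by
          gcongr
      _ = ((k - 1) + (k - 1) * q + r) * (k - 2) := by ring
      _ = n * (k - 2) := by rw [← hn]

/-- The quantity `[n, s]` of the paper, for `n ≥ s`:
`[n,s] = C(s-1,2) + (s-1)(n-s+1)`. -/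
def bracket2 (n s : ℕ) : ℕ := (s - 1).choose 2 + (s - 1) * (n - s + 1)

/-- If `k₁ ≥ k₂ ≥ 3`, `s = ⌊k₁/2⌋ + ⌊k₂/2⌋`, `n₁ ≥ k₁ + k₂` and `n₂ ≥ 1`, then
`[n₁, s] + [n₂, k₂, k₂] < [n₁+n₂, s]`. -/
theorem stmt5 (k₁ k₂ n₁ n₂ : ℕ) (hk₂ : 3 ≤ k₂) (hk : k₂ ≤ k₁)
    (hn₁ : k₁ + k₂ ≤ n₁) (hn₂ : 1 ≤ n₂) :
    bracket2 n₁ (k₁ / 2 + k₂ / 2) + bracket n₂ k₂ k₂ < bracket2 (n₁ + n₂) (k₁ / 2 + k₂ / 2) := by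
  set s := k₁ / 2 + k₂ / 2 with hs
  have hb := bracket_bound n₂ k₂ hk₂
  have hbb : bracket n₂ k₂ k₂ < n₂ * (k₂ - 2) := by
    have hpos : 1 ≤ n₂ * (k₂ - 2) := by have := Nat.mul_le_mul hn₂ (show 1 ≤ k₂ - 2 by omega); simpa using this
    omega
  have hsk : k₂ - 2 ≤ s - 1 := by omega
  have hkey : bracket n₂ k₂ k₂ < (s - 1) * n₂ :=
    hbb.trans_le (by rw [Nat.mul_comm]; exact Nat.mul_le_mul_right n₂ hsk)
  have hn₁s : s ≤ n₁ := by omega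
  have hexp : bracket2 (n₁ + n₂) s = bracket2 n₁ s + (s - 1) * n₂ := by
    unfold bracket2
    have : n₁ + n₂ - s + 1 = (n₁ - s + 1) + n₂ := by omega
    rw [this, Nat.mul_add]; ring
  omega
end

section
/- Let G be a 2P₇-free graph and let x₁x₂…x₁₃ be a path in G on 13 distinct vertices. Then every vertex y of G outside {x₁,…,x₁₃} is non-adjacent to each of x₁, x₆, x₈, x₁₃, and for each p ∈ {2,3,4}, y is not adjacent to both x_p and x_{p+8}. -/
open SimpleGraph

/-- `H` is contained in `G` as a subgraph, i.e. there is an injective graph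
homomorphism from `H` to `G` (a copy of `H` in `G`). -/
def Contains {α β : Type*} (H : SimpleGraph α) (G : SimpleGraph β) : Prop :=
  ∃ f : H →g G, Function.Injective f

/-- `2P₇`: the disjoint union of two copies of the path on 7 vertices. -/
def TwoP7 : SimpleGraph (Fin 7 ⊕ Fin 7) :=
  SimpleGraph.pathGraph 7 ⊕g SimpleGraph.pathGraph 7

lemma path_hom {V : Type*} {G : SimpleGraph V} {a : Fin 7 → V}
    (ha : ∀ i : Fin 6, G.Adj (a i.castSucc) (a i.succ)) {i j : Fin 7}
    (h : (pathGraph 7).Adj i j) : G.Adj (a i) (a j) := by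
  rw [pathGraph_adj] at h
  rcases h with h | h
  · have hi : (i : ℕ) < 6 := by omega
    have := ha ⟨i.1, hi⟩
    have e1 : Fin.castSucc ⟨i.1, hi⟩ = i := Fin.ext rfl
    have e2 : Fin.succ ⟨i.1, hi⟩ = j := Fin.ext (by simpa using h)
    rwa [e1, e2] at this
  · have hj : (j : ℕ) < 6 := by omega
    have := ha ⟨j.1, hj⟩
    have e1 : Fin.castSucc ⟨j.1, hj⟩ = j := Fin.ext rfl
    have e2 : Fin.succ ⟨j.1, hj⟩ = i := Fin.ext (by simpa using h)
    rw [e1, e2] at this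
    exact this.symm

def zfun {V : Type*} (y : V) (x : Fin 13 → V) : Fin 14 → V :=
  fun i => if _ : i.1 = 0 then y else x ⟨i.1 - 1, by omega⟩

lemma zfun_inj {V : Type*} {y : V} {x : Fin 13 → V} (hy : y ∉ Set.range x)
    (hinj : Function.Injective x) : Function.Injective (zfun y x) := by
  intro i j h
  simp only [zfun] at h
  split_ifs at h with h1 h2 h2
  · exact Fin.ext (by omega)
  · exact absurd ⟨_, h.symm⟩ hy
  · exact absurd ⟨_, h⟩ hy
  · have := hinj h
    rw [Fin.mk.injEq] at this
    exact Fin.ext (by omega)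

lemma helper {V : Type*} (G : SimpleGraph V) (z : Fin 14 → V)
    (hz : Function.Injective z) (m : Fin 7 ⊕ Fin 7 → Fin 14)
    (hm : Function.Injective m)
    (h1 : ∀ i : Fin 6, G.Adj (z (m (.inl i.castSucc))) (z (m (.inl i.succ))))
    (h2 : ∀ i : Fin 6, G.Adj (z (m (.inr i.castSucc))) (z (m (.inr i.succ)))) :
    Contains TwoP7 G := by
  refine ⟨⟨fun u => z (m u), ?_⟩, hz.comp hm⟩
  rintro (u | u) (v | v) h <;> simp only [TwoP7, SimpleGraph.sum_adj] at h
  · exact path_hom (a := fun k => z (m (Sum.inl k))) h1 h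
  · exact path_hom (a := fun k => z (m (Sum.inr k))) h2 h

/-- In a `2P₇`-free graph with a path `x₁x₂…x₁₃` on 13 distinct vertices, every
vertex `y` outside the path misses `x₁, x₆, x₈, x₁₃`, and for each `p ∈ {2,3,4}`,
`y` is not adjacent to both `x_p` and `x_{p+8}`.
(Indices are shifted by one: `x i` here is `x_{i+1}` of the paper.) -/
theorem stmt7 {V : Type*} (G : SimpleGraph V) (hfree : ¬ Contains TwoP7 G)
    (x : Fin 13 → V) (hinj : Function.Injective x)
    (hpath : ∀ i : Fin 12, G.Adj (x i.castSucc) (x i.succ)) :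
    ∀ y, y ∉ Set.range x →
      (¬ G.Adj y (x 0) ∧ ¬ G.Adj y (x 5) ∧ ¬ G.Adj y (x 7) ∧ ¬ G.Adj y (x 12)) ∧
      (¬ (G.Adj y (x 1) ∧ G.Adj y (x 9)) ∧ ¬ (G.Adj y (x 2) ∧ G.Adj y (x 10)) ∧
        ¬ (G.Adj y (x 3) ∧ G.Adj y (x 11))) := by
  intro y hy
  have hz : Function.Injective (zfun y x) := zfun_inj hy hinj
  have e01 : G.Adj (x 0) (x 1) := hpath 0
  have e12 : G.Adj (x 1) (x 2) := hpath 1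
  have e23 : G.Adj (x 2) (x 3) := hpath 2
  have e34 : G.Adj (x 3) (x 4) := hpath 3
  have e45 : G.Adj (x 4) (x 5) := hpath 4
  have e56 : G.Adj (x 5) (x 6) := hpath 5
  have e67 : G.Adj (x 6) (x 7) := hpath 6
  have e78 : G.Adj (x 7) (x 8) := hpath 7
  have e89 : G.Adj (x 8) (x 9) := hpath 8
  have e9a : G.Adj (x 9) (x 10) := hpath 9
  have eab : G.Adj (x 10) (x 11) := hpath 10
  have ebc : G.Adj (x 11) (x 12) := hpath 11
  refine ⟨⟨?_, ?_, ?_, ?_⟩, ?_, ?_, ?_⟩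
  · intro ha
    refine hfree (helper G (zfun y x) hz (Sum.elim ![0,1,2,3,4,5,6] ![7,8,9,10,11,12,13])
      (by decide) ?_ ?_) <;> intro i <;> fin_cases i
    · exact ha
    · exact e01
    · exact e12
    · exact e23
    · exact e34
    · exact e45
    · exact e67
    · exact e78
    · exact e89
    · exact e9a
    · exact eab
    · exact ebc
  · intro ha
    refine hfree (helper G (zfun y x) hz (Sum.elim ![1,2,3,4,5,6,0] ![7,8,9,10,11,12,13])
      (by decide) ?_ ?_) <;> intro i <;> fin_cases i
    · exact e01
    · exact e12
    · exact e23
    · exact e34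
    · exact e45
    · exact ha.symm
    · exact e67
    · exact e78
    · exact e89
    · exact e9a
    · exact eab
    · exact ebc
  · intro ha
    refine hfree (helper G (zfun y x) hz (Sum.elim ![1,2,3,4,5,6,7] ![0,8,9,10,11,12,13])
      (by decide) ?_ ?_) <;> intro i <;> fin_cases i
    · exact e01
    · exact e12
    · exact e23
    · exact e34
    · exact e45
    · exact e56
    · exact ha
    · exact e78
    · exact e89
    · exact e9a
    · exact eab
    · exact ebc
  · intro ha
    refine hfree (helper G (zfun y x) hz (Sum.elim ![1,2,3,4,5,6,7] ![8,9,10,11,12,13,0])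
      (by decide) ?_ ?_) <;> intro i <;> fin_cases i
    · exact e01
    · exact e12
    · exact e23
    · exact e34
    · exact e45
    · exact e56
    · exact e78
    · exact e89
    · exact e9a
    · exact eab
    · exact ebc
    · exact ha.symm
  · rintro ⟨h1, h2⟩
    refine hfree (helper G (zfun y x) hz (Sum.elim ![1,2,0,10,11,12,13] ![3,4,5,6,7,8,9])
      (by decide) ?_ ?_) <;> intro i <;> fin_cases i
    · exact e01
    · exact h1.symm
    · exact h2
    · exact e9a
    · exact eab
    · exact ebc
    · exact e23
    · exact e34
    · exact e45
    · exact e56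
    · exact e67
    · exact e78
  · rintro ⟨h1, h2⟩
    refine hfree (helper G (zfun y x) hz (Sum.elim ![1,2,3,0,11,12,13] ![4,5,6,7,8,9,10])
      (by decide) ?_ ?_) <;> intro i <;> fin_cases i
    · exact e01
    · exact e12
    · exact h1.symm
    · exact h2
    · exact eab
    · exact ebc
    · exact e34
    · exact e45
    · exact e56
    · exact e67
    · exact e78
    · exact e89
  · rintro ⟨h1, h2⟩
    refine hfree (helper G (zfun y x) hz (Sum.elim ![1,2,3,4,0,12,13] ![5,6,7,8,9,10,11])
      (by decide) ?_ ?_) <;> intro i <;> fin_cases i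
    · exact e01
    · exact e12
    · exact e23
    · exact h1.symm
    · exact h2
    · exact ebc
    · exact e45
    · exact e56
    · exact e67
    · exact e78
    · exact e89
    · exact e9a
end

section
/- Let G be a 2P₇-free graph and let x₁x₂…x₁₃ be a path in G on 13 distinct vertices. If y is a vertex outside {x₁,…,x₁₃} that has a neighbor outside {x₁,…,x₁₃}, then the neighbors of y on the path all lie in {x₃, x₄, x₇, x₁₀, x₁₁}; in particular y is adjacent to at most 3 vertices of the path. -/
open SimpleGraph

/-- Auxiliary decidable edge-pattern: vertices are indices into the path
(`Sum.inl`) or `y` (`Sum.inr 0`) / `z` (`Sum.inr 1`); `A` records indices of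
path vertices known to be adjacent to `y`. -/
def Rb (A : Finset (Fin 13)) : Fin 13 ⊕ Fin 2 → Fin 13 ⊕ Fin 2 → Bool
  | .inl a, .inl b => a.val + 1 == b.val || b.val + 1 == a.val
  | .inl a, .inr j => j == 0 && decide (a ∈ A)
  | .inr j, .inl a => j == 0 && decide (a ∈ A)
  | .inr j, .inr k => (j == 0 && k == 1) || (j == 1 && k == 0)

lemma build {V : Type*} (G : SimpleGraph V) (x : Fin 13 → V)
    (hinj : Function.Injective x)
    (hpath : ∀ i : Fin 12, G.Adj (x i.castSucc) (x i.succ))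
    (y z : V) (hy : y ∉ Set.range x) (hz : z ∉ Set.range x) (hyz : G.Adj y z)
    (A : Finset (Fin 13)) (hA : ∀ a ∈ A, G.Adj y (x a))
    (s t : Fin 7 → Fin 13 ⊕ Fin 2)
    (hst : Function.Injective (Sum.elim s t))
    (hs : ∀ i : Fin 6, Rb A (s i.castSucc) (s i.succ) = true)
    (ht : ∀ i : Fin 6, Rb A (t i.castSucc) (t i.succ) = true) :
    Contains TwoP7 G := by
  have hp : ∀ a b : Fin 13, (b : ℕ) = (a : ℕ) + 1 → G.Adj (x a) (x b) := by
    intro a b h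
    have ha : (a : ℕ) < 12 := by omega
    have := hpath ⟨a, ha⟩
    rwa [show Fin.castSucc ⟨(a : ℕ), ha⟩ = a from Fin.ext rfl,
      show Fin.succ ⟨(a : ℕ), ha⟩ = b from Fin.ext h.symm] at this
  set w : Fin 13 ⊕ Fin 2 → V := Sum.elim x (fun j => if j = 0 then y else z) with hwdef
  have hw : Function.Injective w := by
    intro u v h
    rcases u with a | j <;> rcases v with b | k
    · exact congrArg _ (hinj h)
    · exfalso
      simp only [hwdef, Sum.elim_inl, Sum.elim_inr] at h
      split at h
      · exact hy ⟨a, h⟩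
      · exact hz ⟨a, h⟩
    · exfalso
      simp only [hwdef, Sum.elim_inl, Sum.elim_inr] at h
      split at h
      · exact hy ⟨b, h.symm⟩
      · exact hz ⟨b, h.symm⟩
    · congr 1
      fin_cases j <;> fin_cases k <;> simp_all [hwdef]
  have hadj : ∀ u v, Rb A u v = true → G.Adj (w u) (w v) := by
    intro u v h
    rcases u with a | j <;> rcases v with b | k <;>
      simp only [Rb, Bool.or_eq_true, Bool.and_eq_true, beq_iff_eq,
        decide_eq_true_eq] at h
    · rcases h with h | h
      · exact hp a b h.symm
      · exact (hp b a h.symm).symm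
    · obtain ⟨rfl, hb⟩ := h
      simpa [hwdef] using (hA a hb).symm
    · obtain ⟨rfl, hb⟩ := h
      simpa [hwdef] using hA b hb
    · rcases h with ⟨rfl, rfl⟩ | ⟨rfl, rfl⟩
      · simpa [hwdef] using hyz
      · simpa [hwdef] using hyz.symm
  refine ⟨⟨fun u => w (Sum.elim s t u), ?_⟩, hw.comp hst⟩
  intro u v huv
  rcases u with u | u <;> rcases v with v | v <;>
    simp only [TwoP7, sum_adj, pathGraph_adj] at huv
  · rcases huv with h | h
    · have h6 : (u : ℕ) < 6 := by omega
      have := hadj _ _ (hs ⟨u, h6⟩)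
      rwa [show Fin.castSucc ⟨(u : ℕ), h6⟩ = u from Fin.ext rfl,
        show Fin.succ ⟨(u : ℕ), h6⟩ = v from Fin.ext h] at this
    · have h6 : (v : ℕ) < 6 := by omega
      have := hadj _ _ (hs ⟨v, h6⟩)
      rw [show Fin.castSucc ⟨(v : ℕ), h6⟩ = v from Fin.ext rfl,
        show Fin.succ ⟨(v : ℕ), h6⟩ = u from Fin.ext h] at this
      exact this.symm
  · rcases huv with h | h
    · have h6 : (u : ℕ) < 6 := by omega
      have := hadj _ _ (ht ⟨u, h6⟩)
      rwa [show Fin.castSucc ⟨(u : ℕ), h6⟩ = u from Fin.ext rfl,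
        show Fin.succ ⟨(u : ℕ), h6⟩ = v from Fin.ext h] at this
    · have h6 : (v : ℕ) < 6 := by omega
      have := hadj _ _ (ht ⟨v, h6⟩)
      rw [show Fin.castSucc ⟨(v : ℕ), h6⟩ = v from Fin.ext rfl,
        show Fin.succ ⟨(v : ℕ), h6⟩ = u from Fin.ext h] at this
      exact this.symm

lemma card3 {α : Type*} (a b c : α) : ({a, b, c} : Set α).ncard ≤ 3 := by
  calc ({a, b, c} : Set α).ncard ≤ ({b, c} : Set α).ncard + 1 :=
        Set.ncard_insert_le _ _
    _ ≤ (({c} : Set α).ncard + 1) + 1 := by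
        gcongr
        exact Set.ncard_insert_le _ _
    _ ≤ 3 := by simp

/-- In a `2P₇`-free graph with a path `x₁x₂…x₁₃` on 13 distinct vertices, if a
vertex `y` outside the path has a neighbour outside the path, then all neighbours
of `y` on the path lie in `{x₃, x₄, x₇, x₁₀, x₁₁}` (0-based indices `{2,3,6,9,10}`);
in particular `y` has at most 3 neighbours on the path. -/
theorem stmt8 {V : Type*} (G : SimpleGraph V) (hfree : ¬ Contains TwoP7 G)
    (x : Fin 13 → V) (hinj : Function.Injective x)
    (hpath : ∀ i : Fin 12, G.Adj (x i.castSucc) (x i.succ)) :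
    ∀ y, y ∉ Set.range x → (∃ z, z ∉ Set.range x ∧ G.Adj y z) →
      (∀ i : Fin 13, G.Adj y (x i) → (i : ℕ) ∈ ({2, 3, 6, 9, 10} : Set ℕ)) ∧
      ({v : V | v ∈ Set.range x ∧ G.Adj y v}).ncard ≤ 3 := by
  intro y hy hex
  obtain ⟨z, hz, hyz⟩ := hex
  have bld := build G x hinj hpath y z hy hz hyz
  have single : ∀ i : Fin 13, G.Adj y (x i) →
      ∀ a ∈ ({i} : Finset (Fin 13)), G.Adj y (x a) := by
    intro i hi a ha
    rw [Finset.mem_singleton] at ha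
    subst ha; exact hi
  have key : ∀ i : Fin 13, G.Adj y (x i) → (i : ℕ) ∈ ({2, 3, 6, 9, 10} : Set ℕ) := by
    intro i hi
    by_contra hmem
    simp only [Set.mem_insert_iff, Set.mem_singleton_iff, not_or] at hmem
    have hlt := i.isLt
    apply hfree
    have hcase : (i : ℕ) = 0 ∨ (i : ℕ) = 1 ∨ (i : ℕ) = 4 ∨ (i : ℕ) = 5 ∨
        (i : ℕ) = 7 ∨ (i : ℕ) = 8 ∨ (i : ℕ) = 11 ∨ (i : ℕ) = 12 := by omega
    rcases hcase with h | h | h | h | h | h | h | h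
    · have : i = (0 : Fin 13) := Fin.ext (by simpa using h)
      subst this
      exact bld {0} (single _ hi)
        ![.inl 4, .inl 3, .inl 2, .inl 1, .inl 0, .inr 0, .inr 1]
        ![.inl 5, .inl 6, .inl 7, .inl 8, .inl 9, .inl 10, .inl 11]
        (by decide) (by decide) (by decide)
    · have : i = (1 : Fin 13) := Fin.ext (by simpa using h)
      subst this
      exact bld {1} (single _ hi)
        ![.inl 5, .inl 4, .inl 3, .inl 2, .inl 1, .inr 0, .inr 1]
        ![.inl 6, .inl 7, .inl 8, .inl 9, .inl 10, .inl 11, .inl 12]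
        (by decide) (by decide) (by decide)
    · have : i = (4 : Fin 13) := Fin.ext (by simpa using h)
      subst this
      exact bld {4} (single _ hi)
        ![.inl 0, .inl 1, .inl 2, .inl 3, .inl 4, .inr 0, .inr 1]
        ![.inl 5, .inl 6, .inl 7, .inl 8, .inl 9, .inl 10, .inl 11]
        (by decide) (by decide) (by decide)
    · have : i = (5 : Fin 13) := Fin.ext (by simpa using h)
      subst this
      exact bld {5} (single _ hi)
        ![.inl 0, .inl 1, .inl 2, .inl 3, .inl 4, .inl 5, .inr 0]
        ![.inl 6, .inl 7, .inl 8, .inl 9, .inl 10, .inl 11, .inl 12]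
        (by decide) (by decide) (by decide)
    · have : i = (7 : Fin 13) := Fin.ext (by simpa using h)
      subst this
      exact bld {7} (single _ hi)
        ![.inl 0, .inl 1, .inl 2, .inl 3, .inl 4, .inl 5, .inl 6]
        ![.inr 1, .inr 0, .inl 7, .inl 8, .inl 9, .inl 10, .inl 11]
        (by decide) (by decide) (by decide)
    · have : i = (8 : Fin 13) := Fin.ext (by simpa using h)
      subst this
      exact bld {8} (single _ hi)
        ![.inl 0, .inl 1, .inl 2, .inl 3, .inl 4, .inl 5, .inl 6]
        ![.inr 1, .inr 0, .inl 8, .inl 9, .inl 10, .inl 11, .inl 12]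
        (by decide) (by decide) (by decide)
    · have : i = (11 : Fin 13) := Fin.ext (by simpa using h)
      subst this
      exact bld {11} (single _ hi)
        ![.inl 0, .inl 1, .inl 2, .inl 3, .inl 4, .inl 5, .inl 6]
        ![.inr 1, .inr 0, .inl 11, .inl 10, .inl 9, .inl 8, .inl 7]
        (by decide) (by decide) (by decide)
    · have : i = (12 : Fin 13) := Fin.ext (by simpa using h)
      subst this
      exact bld {12} (single _ hi)
        ![.inl 0, .inl 1, .inl 2, .inl 3, .inl 4, .inl 5, .inl 6]
        ![.inr 1, .inr 0, .inl 12, .inl 11, .inl 10, .inl 9, .inl 8]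
        (by decide) (by decide) (by decide)
  refine ⟨key, ?_⟩
  have n23 : ¬ (G.Adj y (x 2) ∧ G.Adj y (x 3)) := by
    rintro ⟨h2, h3⟩
    apply hfree
    refine bld {2, 3} ?_
      ![.inl 0, .inl 1, .inl 2, .inr 0, .inl 3, .inl 4, .inl 5]
      ![.inl 6, .inl 7, .inl 8, .inl 9, .inl 10, .inl 11, .inl 12]
      (by decide) (by decide) (by decide)
    intro a ha
    simp only [Finset.mem_insert, Finset.mem_singleton] at ha
    rcases ha with rfl | rfl
    · exact h2
    · exact h3
  have n210 : ¬ (G.Adj y (x 2) ∧ G.Adj y (x 10)) := by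
    rintro ⟨h2, h10⟩
    apply hfree
    refine bld {2, 10} ?_
      ![.inl 0, .inl 1, .inl 2, .inr 0, .inl 10, .inl 11, .inl 12]
      ![.inl 3, .inl 4, .inl 5, .inl 6, .inl 7, .inl 8, .inl 9]
      (by decide) (by decide) (by decide)
    intro a ha
    simp only [Finset.mem_insert, Finset.mem_singleton] at ha
    rcases ha with rfl | rfl
    · exact h2
    · exact h10
  have n910 : ¬ (G.Adj y (x 9) ∧ G.Adj y (x 10)) := by
    rintro ⟨h9, h10⟩
    apply hfree
    refine bld {9, 10} ?_
      ![.inl 0, .inl 1, .inl 2, .inl 3, .inl 4, .inl 5, .inl 6]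
      ![.inl 7, .inl 8, .inl 9, .inr 0, .inl 10, .inl 11, .inl 12]
      (by decide) (by decide) (by decide)
    intro a ha
    simp only [Finset.mem_insert, Finset.mem_singleton] at ha
    rcases ha with rfl | rfl
    · exact h9
    · exact h10
  have hS : {v : V | v ∈ Set.range x ∧ G.Adj y v} = x '' {i : Fin 13 | G.Adj y (x i)} := by
    ext v
    constructor
    · rintro ⟨⟨i, rfl⟩, hv⟩
      exact ⟨i, hv, rfl⟩
    · rintro ⟨i, hi, rfl⟩
      exact ⟨⟨i, rfl⟩, hi⟩
  rw [hS, Set.ncard_image_of_injective _ hinj]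
  have keyval : ∀ i : Fin 13, G.Adj y (x i) →
      i = 2 ∨ i = 3 ∨ i = 6 ∨ i = 9 ∨ i = 10 := by
    intro i hi
    have := key i hi
    simp only [Set.mem_insert_iff, Set.mem_singleton_iff] at this
    rcases this with h | h | h | h | h
    · exact Or.inl (Fin.ext (by simpa using h))
    · exact Or.inr (Or.inl (Fin.ext (by simpa using h)))
    · exact Or.inr (Or.inr (Or.inl (Fin.ext (by simpa using h))))
    · exact Or.inr (Or.inr (Or.inr (Or.inl (Fin.ext (by simpa using h)))))
    · exact Or.inr (Or.inr (Or.inr (Or.inr (Fin.ext (by simpa using h)))))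
  by_cases h2 : G.Adj y (x 2)
  · have hsub : {i : Fin 13 | G.Adj y (x i)} ⊆ ({2, 6, 9} : Set (Fin 13)) := by
      intro i hi
      rcases keyval i hi with rfl | rfl | rfl | rfl | rfl
      · exact Or.inl rfl
      · exact absurd ⟨h2, hi⟩ n23
      · exact Or.inr (Or.inl rfl)
      · exact Or.inr (Or.inr rfl)
      · exact absurd ⟨h2, hi⟩ n210
    exact (Set.ncard_le_ncard hsub (Set.toFinite _)).trans (card3 _ _ _)
  · by_cases h10 : G.Adj y (x 10)
    · have hsub : {i : Fin 13 | G.Adj y (x i)} ⊆ ({3, 6, 10} : Set (Fin 13)) := by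
        intro i hi
        rcases keyval i hi with rfl | rfl | rfl | rfl | rfl
        · exact absurd hi h2
        · exact Or.inl rfl
        · exact Or.inr (Or.inl rfl)
        · exact absurd ⟨hi, h10⟩ n910
        · exact Or.inr (Or.inr rfl)
      exact (Set.ncard_le_ncard hsub (Set.toFinite _)).trans (card3 _ _ _)
    · have hsub : {i : Fin 13 | G.Adj y (x i)} ⊆ ({3, 6, 9} : Set (Fin 13)) := by
        intro i hi
        rcases keyval i hi with rfl | rfl | rfl | rfl | rfl
        · exact absurd hi h2
        · exact Or.inl rfl
        · exact Or.inr (Or.inl rfl)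
        · exact Or.inr (Or.inr rfl)
        · exact absurd hi h10
      exact (Set.ncard_le_ncard hsub (Set.toFinite _)).trans (card3 _ _ _)
end

section
/- Let G be a 2P₇-free graph and let x₁x₂…x₁₃ be a path in G on 13 distinct vertices. If there exist distinct vertices y₁, y₂, y₃ outside {x₁,…,x₁₃} with y₁ adjacent to y₂, y₂ adjacent to y₃, and y₁ adjacent to some vertex of the path, then the number of edges of G with both endpoints in {x₁,…,x₁₃} is at most 57. -/
open SimpleGraph

lemma two_paths {V : Type*} {G : SimpleGraph V} (p q : Fin 7 → V)
    (hp : ∀ i : Fin 6, G.Adj (p i.castSucc) (p i.succ))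
    (hq : ∀ i : Fin 6, G.Adj (q i.castSucc) (q i.succ))
    (hpi : Function.Injective p) (hqi : Function.Injective q)
    (hd : ∀ i j, p i ≠ q j) : Contains TwoP7 G := by
  have key : ∀ (r : Fin 7 → V), (∀ i : Fin 6, G.Adj (r i.castSucc) (r i.succ)) →
      ∀ u v : Fin 7, u.val + 1 = v.val → G.Adj (r u) (r v) := by
    intro r hr u v h
    have h6 : u.val < 6 := by omega
    have e1 : (⟨u.val, h6⟩ : Fin 6).castSucc = u := by ext; simp
    have e2 : (⟨u.val, h6⟩ : Fin 6).succ = v := by ext; simp [Fin.succ, h]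
    have := hr ⟨u.val, h6⟩
    rwa [e1, e2] at this
  refine ⟨⟨Sum.elim p q, ?_⟩, ?_⟩
  · intro u v huv
    match u, v with
    | .inl u, .inl v =>
      rw [TwoP7, SimpleGraph.sum_adj] at huv
      simp only at huv
      rw [pathGraph_adj] at huv
      rcases huv with h | h
      · exact key p hp u v h
      · exact (key p hp v u h).symm
    | .inr u, .inr v =>
      rw [TwoP7, SimpleGraph.sum_adj] at huv
      simp only at huv
      rw [pathGraph_adj] at huv
      rcases huv with h | h
      · exact key q hq u v h
      · exact (key q hq v u h).symm
    | .inl u, .inr v => simp [TwoP7] at huv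
    | .inr u, .inl v => simp [TwoP7] at huv
  · intro u v h
    match u, v with
    | .inl u, .inl v => exact congrArg _ (hpi h)
    | .inr u, .inr v => exact congrArg _ (hqi h)
    | .inl u, .inr v => exact absurd h (hd u v)
    | .inr u, .inl v => exact absurd h.symm (hd v u)

lemma consecAdj {V : Type*} {G : SimpleGraph V} {x : Fin 13 → V}
    (hpath : ∀ i : Fin 12, G.Adj (x i.castSucc) (x i.succ))
    {a b : Fin 13} (h : a.val + 1 = b.val) : G.Adj (x a) (x b) := by
  have h12 : a.val < 12 := by omega
  have e1 : (⟨a.val, h12⟩ : Fin 12).castSucc = a := by ext; simp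
  have e2 : (⟨a.val, h12⟩ : Fin 12).succ = b := by ext; simp [Fin.succ, h]
  have := hpath ⟨a.val, h12⟩
  rwa [e1, e2] at this

lemma chordCase {V : Type*} {G : SimpleGraph V} (hfree : ¬ Contains TwoP7 G)
    {x : Fin 13 → V} (hinj : Function.Injective x)
    (hpath : ∀ i : Fin 12, G.Adj (x i.castSucc) (x i.succ))
    {y1 y2 y3 : V} (hy12 : y1 ≠ y2) (hy13 : y1 ≠ y3) (hy23 : y2 ≠ y3)
    (hr1 : y1 ∉ Set.range x) (hr2 : y2 ∉ Set.range x) (hr3 : y3 ∉ Set.range x)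
    (h12 : G.Adj y1 y2) (h23 : G.Adj y2 y3)
    {a b : Fin 13} (hab : G.Adj (x a) (x b))
    (s : Fin 4 → Fin 13) (q : Fin 7 → Fin 13)
    (hi : G.Adj y1 (x (s 0)))
    (hgood : Function.Injective s ∧ Function.Injective q ∧ (∀ m n, s m ≠ q n) ∧
      (∀ m : Fin 3, (s m.castSucc).val + 1 = (s m.succ).val ∨
        (s m.succ).val + 1 = (s m.castSucc).val) ∧
      (∀ m : Fin 6, (q m.castSucc).val + 1 = (q m.succ).val ∨
        (q m.succ).val + 1 = (q m.castSucc).val ∨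
        (q m.castSucc = a ∧ q m.succ = b) ∨ (q m.castSucc = b ∧ q m.succ = a))) :
    False := by
  obtain ⟨hsinj, hqinj, hdisj, hside, hchain⟩ := hgood
  have hstep : ∀ u v : Fin 13, u.val + 1 = v.val ∨ v.val + 1 = u.val → G.Adj (x u) (x v) :=
    fun u v h => h.elim (consecAdj hpath) (fun h => (consecAdj hpath h).symm)
  have hs : ∀ m : Fin 3, G.Adj (x (s m.castSucc)) (x (s m.succ)) := fun m => hstep _ _ (hside m)
  have hq : ∀ m : Fin 6, G.Adj (x (q m.castSucc)) (x (q m.succ)) := by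
    intro m
    rcases hchain m with h | h | ⟨h1, h2⟩ | ⟨h1, h2⟩
    · exact hstep _ _ (Or.inl h)
    · exact hstep _ _ (Or.inr h)
    · rw [h1, h2]; exact hab
    · rw [h1, h2]; exact hab.symm
  have hyx : ∀ (y : V), y ∉ Set.range x → ∀ i, y ≠ x i := fun y hy i h => hy ⟨i, h.symm⟩
  have hxs : ∀ i j : Fin 4, i ≠ j → x (s i) ≠ x (s j) :=
    fun i j hij h => hij (hsinj (hinj h))
  have hyinj : Function.Injective ![y3, y2, y1] := by
    intro u v h
    fin_cases u <;> fin_cases v <;> simp_all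
  have hcross : ∀ (u : Fin 3) (w : Fin 4), ![y3, y2, y1] u ≠ (x ∘ s) w := by
    intro u w
    fin_cases u
    · exact hyx y3 hr3 (s w)
    · exact hyx y2 hr2 (s w)
    · exact hyx y1 hr1 (s w)
  have g : Fin 7 → Fin 3 ⊕ Fin 4 :=
    ![Sum.inl 0, Sum.inl 1, Sum.inl 2, Sum.inr 0, Sum.inr 1, Sum.inr 2, Sum.inr 3]
  set p : Fin 7 → V := (Sum.elim ![y3, y2, y1] (x ∘ s)) ∘
    ![Sum.inl 0, Sum.inl 1, Sum.inl 2, Sum.inr 0, Sum.inr 1, Sum.inr 2, Sum.inr 3] with hp_def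
  have hginj : Function.Injective
      (![Sum.inl 0, Sum.inl 1, Sum.inl 2, Sum.inr 0, Sum.inr 1, Sum.inr 2, Sum.inr 3] :
        Fin 7 → Fin 3 ⊕ Fin 4) := by decide
  have hpinj : Function.Injective p :=
    (hyinj.sumElim (hinj.comp hsinj) hcross).comp hginj
  have hp : ∀ i : Fin 6, G.Adj (p i.castSucc) (p i.succ) := by
    intro i
    fin_cases i
    · exact h23.symm
    · exact h12.symm
    · exact hi
    · exact hs 0
    · exact hs 1
    · exact hs 2
  have hdpq : ∀ i j, p i ≠ (x ∘ q) j := by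
    intro i j
    fin_cases i
    · exact hyx y3 hr3 (q j)
    · exact hyx y2 hr2 (q j)
    · exact hyx y1 hr1 (q j)
    · exact fun h => hdisj 0 j (hinj h)
    · exact fun h => hdisj 1 j (hinj h)
    · exact fun h => hdisj 2 j (hinj h)
    · exact fun h => hdisj 3 j (hinj h)
  exact hfree (two_paths p (x ∘ q) hp hq hpinj (hinj.comp hqinj) hdpq)

/-- Fact 2: if there is a path `y₁y₂y₃` outside the 13-vertex path with `y₁` hitting the path, then there are at most 57 edges with both endpoints on the path. -/
theorem stmt11 {V : Type*} [Fintype V] (G : SimpleGraph V) (hfree : ¬ Contains TwoP7 G)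
    (x : Fin 13 → V) (hinj : Function.Injective x)
    (hpath : ∀ i : Fin 12, G.Adj (x i.castSucc) (x i.succ))
    (hP3 : ∃ y₁ y₂ y₃, y₁ ≠ y₂ ∧ y₁ ≠ y₃ ∧ y₂ ≠ y₃ ∧
      y₁ ∉ Set.range x ∧ y₂ ∉ Set.range x ∧ y₃ ∉ Set.range x ∧
      G.Adj y₁ y₂ ∧ G.Adj y₂ y₃ ∧ ∃ i : Fin 13, G.Adj y₁ (x i)) :
    ({e : Sym2 V | e ∈ G.edgeSet ∧ ∀ v ∈ e, v ∈ Set.range x}).ncard ≤ 57 := by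
  classical
  obtain ⟨y1, y2, y3, hy12, hy13, hy23, hr1, hr2, hr3, h12, h23, i, hi⟩ := hP3
  have hab01 : G.Adj (x 0) (x 1) := consecAdj hpath rfl
  by_cases h6 : i = (6 : Fin 13)
  case neg =>
    exfalso
    fin_cases i
    · exact chordCase hfree hinj hpath hy12 hy13 hy23 hr1 hr2 hr3 h12 h23 hab01 ![0,1,2,3] ![6,7,8,9,10,11,12] hi (by decide)
    · exact chordCase hfree hinj hpath hy12 hy13 hy23 hr1 hr2 hr3 h12 h23 hab01 ![1,2,3,4] ![6,7,8,9,10,11,12] hi (by decide)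
    · exact chordCase hfree hinj hpath hy12 hy13 hy23 hr1 hr2 hr3 h12 h23 hab01 ![2,3,4,5] ![6,7,8,9,10,11,12] hi (by decide)
    · exact chordCase hfree hinj hpath hy12 hy13 hy23 hr1 hr2 hr3 h12 h23 hab01 ![3,2,1,0] ![6,7,8,9,10,11,12] hi (by decide)
    · exact chordCase hfree hinj hpath hy12 hy13 hy23 hr1 hr2 hr3 h12 h23 hab01 ![4,3,2,1] ![6,7,8,9,10,11,12] hi (by decide)
    · exact chordCase hfree hinj hpath hy12 hy13 hy23 hr1 hr2 hr3 h12 h23 hab01 ![5,4,3,2] ![6,7,8,9,10,11,12] hi (by decide)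
    · exact absurd rfl h6
    · exact chordCase hfree hinj hpath hy12 hy13 hy23 hr1 hr2 hr3 h12 h23 hab01 ![7,8,9,10] ![0,1,2,3,4,5,6] hi (by decide)
    · exact chordCase hfree hinj hpath hy12 hy13 hy23 hr1 hr2 hr3 h12 h23 hab01 ![8,9,10,11] ![0,1,2,3,4,5,6] hi (by decide)
    · exact chordCase hfree hinj hpath hy12 hy13 hy23 hr1 hr2 hr3 h12 h23 hab01 ![9,10,11,12] ![0,1,2,3,4,5,6] hi (by decide)
    · exact chordCase hfree hinj hpath hy12 hy13 hy23 hr1 hr2 hr3 h12 h23 hab01 ![10,9,8,7] ![0,1,2,3,4,5,6] hi (by decide)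
    · exact chordCase hfree hinj hpath hy12 hy13 hy23 hr1 hr2 hr3 h12 h23 hab01 ![11,10,9,8] ![0,1,2,3,4,5,6] hi (by decide)
    · exact chordCase hfree hinj hpath hy12 hy13 hy23 hr1 hr2 hr3 h12 h23 hab01 ![12,11,10,9] ![0,1,2,3,4,5,6] hi (by decide)
  case pos =>
    subst h6
    have hi6 : G.Adj y1 (x 6) := hi
    set L : List (Fin 13 × Fin 13) := [(0, 7), (0, 8), (0, 9), (0, 10), (0, 11), (0, 12), (1, 7), (1, 8), (1, 10), (1, 11), (1, 12), (2, 7), (2, 8), (2, 9), (2, 10), (2, 11), (2, 12), (3, 10), (3, 12), (4, 10), (4, 11), (4, 12), (5, 10), (5, 11), (5, 12)] with hL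
    have noAdjL : ∀ p ∈ L, ¬ G.Adj (x p.1) (x p.2) := by
      intro p hp
      rw [hL] at hp
      fin_cases hp
      · exact fun h => chordCase hfree hinj hpath hy12 hy13 hy23 hr1 hr2 hr3 h12 h23 h ![6,5,4,3] ![0, 7, 8, 9, 10, 11, 12] hi6 (by decide)
      · exact fun h => chordCase hfree hinj hpath hy12 hy13 hy23 hr1 hr2 hr3 h12 h23 h ![6,5,4,3] ![1, 0, 8, 9, 10, 11, 12] hi6 (by decide)
      · exact fun h => chordCase hfree hinj hpath hy12 hy13 hy23 hr1 hr2 hr3 h12 h23 h ![6,5,4,3] ![2, 1, 0, 9, 10, 11, 12] hi6 (by decide)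
      · exact fun h => chordCase hfree hinj hpath hy12 hy13 hy23 hr1 hr2 hr3 h12 h23 h ![6,5,4,3] ![2, 1, 0, 10, 9, 8, 7] hi6 (by decide)
      · exact fun h => chordCase hfree hinj hpath hy12 hy13 hy23 hr1 hr2 hr3 h12 h23 h ![6,5,4,3] ![1, 0, 11, 10, 9, 8, 7] hi6 (by decide)
      · exact fun h => chordCase hfree hinj hpath hy12 hy13 hy23 hr1 hr2 hr3 h12 h23 h ![6,5,4,3] ![0, 12, 11, 10, 9, 8, 7] hi6 (by decide)
      · exact fun h => chordCase hfree hinj hpath hy12 hy13 hy23 hr1 hr2 hr3 h12 h23 h ![6,5,4,3] ![0, 1, 7, 8, 9, 10, 11] hi6 (by decide)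
      · exact fun h => chordCase hfree hinj hpath hy12 hy13 hy23 hr1 hr2 hr3 h12 h23 h ![6,5,4,3] ![0, 1, 8, 9, 10, 11, 12] hi6 (by decide)
      · exact fun h => chordCase hfree hinj hpath hy12 hy13 hy23 hr1 hr2 hr3 h12 h23 h ![6,7,8,9] ![4, 3, 2, 1, 10, 11, 12] hi6 (by decide)
      · exact fun h => chordCase hfree hinj hpath hy12 hy13 hy23 hr1 hr2 hr3 h12 h23 h ![6,5,4,3] ![0, 1, 11, 10, 9, 8, 7] hi6 (by decide)
      · exact fun h => chordCase hfree hinj hpath hy12 hy13 hy23 hr1 hr2 hr3 h12 h23 h ![6,5,4,3] ![0, 1, 12, 11, 10, 9, 8] hi6 (by decide)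
      · exact fun h => chordCase hfree hinj hpath hy12 hy13 hy23 hr1 hr2 hr3 h12 h23 h ![6,5,4,3] ![0, 1, 2, 7, 8, 9, 10] hi6 (by decide)
      · exact fun h => chordCase hfree hinj hpath hy12 hy13 hy23 hr1 hr2 hr3 h12 h23 h ![6,5,4,3] ![0, 1, 2, 8, 9, 10, 11] hi6 (by decide)
      · exact fun h => chordCase hfree hinj hpath hy12 hy13 hy23 hr1 hr2 hr3 h12 h23 h ![6,5,4,3] ![0, 1, 2, 9, 10, 11, 12] hi6 (by decide)
      · exact fun h => chordCase hfree hinj hpath hy12 hy13 hy23 hr1 hr2 hr3 h12 h23 h ![6,5,4,3] ![0, 1, 2, 10, 9, 8, 7] hi6 (by decide)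
      · exact fun h => chordCase hfree hinj hpath hy12 hy13 hy23 hr1 hr2 hr3 h12 h23 h ![6,5,4,3] ![0, 1, 2, 11, 10, 9, 8] hi6 (by decide)
      · exact fun h => chordCase hfree hinj hpath hy12 hy13 hy23 hr1 hr2 hr3 h12 h23 h ![6,5,4,3] ![0, 1, 2, 12, 11, 10, 9] hi6 (by decide)
      · exact fun h => chordCase hfree hinj hpath hy12 hy13 hy23 hr1 hr2 hr3 h12 h23 h ![6,7,8,9] ![0, 1, 2, 3, 10, 11, 12] hi6 (by decide)
      · exact fun h => chordCase hfree hinj hpath hy12 hy13 hy23 hr1 hr2 hr3 h12 h23 h ![6,7,8,9] ![0, 1, 2, 3, 12, 11, 10] hi6 (by decide)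
      · exact fun h => chordCase hfree hinj hpath hy12 hy13 hy23 hr1 hr2 hr3 h12 h23 h ![6,7,8,9] ![0, 1, 2, 3, 4, 10, 11] hi6 (by decide)
      · exact fun h => chordCase hfree hinj hpath hy12 hy13 hy23 hr1 hr2 hr3 h12 h23 h ![6,7,8,9] ![0, 1, 2, 3, 4, 11, 10] hi6 (by decide)
      · exact fun h => chordCase hfree hinj hpath hy12 hy13 hy23 hr1 hr2 hr3 h12 h23 h ![6,7,8,9] ![0, 1, 2, 3, 4, 12, 11] hi6 (by decide)
      · exact fun h => chordCase hfree hinj hpath hy12 hy13 hy23 hr1 hr2 hr3 h12 h23 h ![6,7,8,9] ![0, 1, 2, 3, 4, 5, 10] hi6 (by decide)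
      · exact fun h => chordCase hfree hinj hpath hy12 hy13 hy23 hr1 hr2 hr3 h12 h23 h ![6,7,8,9] ![0, 1, 2, 3, 4, 5, 11] hi6 (by decide)
      · exact fun h => chordCase hfree hinj hpath hy12 hy13 hy23 hr1 hr2 hr3 h12 h23 h ![6,7,8,9] ![0, 1, 2, 3, 4, 5, 12] hi6 (by decide)
    set P : Finset (Fin 13 × Fin 13) :=
      Finset.univ.filter (fun pr : Fin 13 × Fin 13 => pr.1 < pr.2 ∧ pr ∉ L) with hP
    have hPcard : P.card = 53 := by decide
    have hsub : {e : Sym2 V | e ∈ G.edgeSet ∧ ∀ v ∈ e, v ∈ Set.range x} ⊆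
        ↑(P.image (fun pr => s(x pr.1, x pr.2))) := by
      intro e he
      induction e using Sym2.ind with
      | _ u v =>
        obtain ⟨he1, he2⟩ := he
        rw [SimpleGraph.mem_edgeSet] at he1
        obtain ⟨a, ha⟩ := he2 u (Sym2.mem_mk_left u v)
        obtain ⟨b, hb⟩ := he2 v (Sym2.mem_mk_right u v)
        subst ha hb
        have hne : a ≠ b := fun h => he1.ne (by rw [h])
        simp only [Finset.coe_image, Set.mem_image, Finset.mem_coe, hP, Finset.mem_filter]
        rcases lt_or_gt_of_ne hne with hlt | hgt
        · exact ⟨(a, b), ⟨Finset.mem_univ _, hlt, fun hmem => noAdjL _ hmem he1⟩, rfl⟩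
        · exact ⟨(b, a), ⟨Finset.mem_univ _, hgt, fun hmem => noAdjL _ hmem he1.symm⟩,
            Sym2.eq_swap⟩
    calc ({e : Sym2 V | e ∈ G.edgeSet ∧ ∀ v ∈ e, v ∈ Set.range x}).ncard
        ≤ (↑(P.image (fun pr => s(x pr.1, x pr.2))) : Set (Sym2 V)).ncard :=
          Set.ncard_le_ncard hsub (Finset.finite_toSet _)
      _ = (P.image (fun pr => s(x pr.1, x pr.2))).card := Set.ncard_coe_finset _
      _ ≤ P.card := Finset.card_image_le
      _ = 53 := hPcard
      _ ≤ 57 := by norm_num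
end

section
/- Let G be a 2P₇-free graph and let x₁x₂…x₁₃ be a path in G on 13 distinct vertices. If there is a vertex y outside {x₁,…,x₁₃} that has a neighbor outside {x₁,…,x₁₃} and is adjacent to exactly one vertex of the path, then the number of edges of G with both endpoints in {x₁,…,x₁₃} is at most 68. -/
open SimpleGraph

lemma chain_hom {V : Type*} {G : SimpleGraph V} {p : Fin 7 → V}
    (hp : ∀ i : Fin 6, G.Adj (p i.castSucc) (p i.succ)) :
    ∀ i j : Fin 7, (pathGraph 7).Adj i j → G.Adj (p i) (p j) := by
  intro i j h
  rw [pathGraph_adj] at h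
  rcases h with h | h
  · have hi : (i : ℕ) < 6 := by omega
    have := hp ⟨i, hi⟩
    have h1 : (⟨i, hi⟩ : Fin 6).castSucc = i := by ext; simp
    have h2 : (⟨i, hi⟩ : Fin 6).succ = j := by ext; simp [← h]
    rwa [h1, h2] at this
  · have hj : (j : ℕ) < 6 := by omega
    have := hp ⟨j, hj⟩
    have h1 : (⟨j, hj⟩ : Fin 6).castSucc = j := by ext; simp
    have h2 : (⟨j, hj⟩ : Fin 6).succ = i := by ext; simp [← h]
    rw [h1, h2] at this
    exact this.symm

lemma twoP7_of_chains {V : Type*} {G : SimpleGraph V} {p q : Fin 7 → V}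
    (hp : ∀ i : Fin 6, G.Adj (p i.castSucc) (p i.succ))
    (hq : ∀ i : Fin 6, G.Adj (q i.castSucc) (q i.succ))
    (hinj : Function.Injective (Sum.elim p q)) : Contains TwoP7 G := by
  refine ⟨⟨Sum.elim p q, ?_⟩, hinj⟩
  rintro (i | i) (j | j) h
  · exact chain_hom hp i j h
  · exact absurd h (by simp [TwoP7])
  · exact absurd h (by simp [TwoP7])
  · exact chain_hom hq i j h

lemma contains_twoP7 {V : Type*} {G : SimpleGraph V} {x : Fin 13 → V}
    (hinj : Function.Injective x) {y z : V}
    (hy : y ∉ Set.range x) (hz : z ∉ Set.range x) (hzy : G.Adj z y)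
    (a : Fin 5 → Fin 13) (b : Fin 7 → Fin 13)
    (ha : Function.Injective a) (hb : Function.Injective b)
    (hd : ∀ i j, a i ≠ b j)
    (hya : G.Adj y (x (a 0)))
    (hca : ∀ i : Fin 4, G.Adj (x (a i.castSucc)) (x (a i.succ)))
    (hcb : ∀ i : Fin 6, G.Adj (x (b i.castSucc)) (x (b i.succ))) :
    Contains TwoP7 G := by
  set p : Fin 7 → V := ![z, y, x (a 0), x (a 1), x (a 2), x (a 3), x (a 4)] with hp
  have hyx : ∀ i, y ≠ x i := fun i e => hy ⟨i, e.symm⟩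
  have hzx : ∀ i, z ≠ x i := fun i e => hz ⟨i, e.symm⟩
  have hax : ∀ i j : Fin 5, i ≠ j → x (a i) ≠ x (a j) :=
    fun i j hij e => hij (ha (hinj e))
  have habx : ∀ i j, x (a i) ≠ x (b j) := fun i j e => hd i j (hinj e)
  refine twoP7_of_chains (p := p) (q := fun i => x (b i)) ?_ hcb
    (Function.Injective.sumElim ?_ (hinj.comp hb) ?_)
  · intro i
    fin_cases i
    · exact hzy
    · exact hya
    · exact hca 0
    · exact hca 1
    · exact hca 2
    · exact hca 3
  · rw [← List.nodup_ofFn]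
    simp only [hp]
    simp [List.ofFn_succ, hzy.ne, hzx, hyx]
    refine ⟨⟨?_,?_,?_,?_⟩,⟨?_,?_,?_⟩,⟨?_,?_⟩,?_⟩ <;> exact hax _ _ (by decide)
  · rintro (i) j
    fin_cases i <;> simp only [hp] <;>
      first
        | exact habx _ _
        | (intro e; exact hzx _ e)
        | (intro e; exact hyx _ e)

/-- Key helper: assuming one or two extra edges `x u — x v`, `x u' — x v'` on the
path, the existence of a 5-indices sequence `a` starting at the neighbour of `y`
and a 7-indices sequence `b`, disjoint, each consecutive step being a path step or
one of the extra edges, contradicts 2P7-freeness. -/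
lemma no_edge {V : Type*} {G : SimpleGraph V} {x : Fin 13 → V}
    (hinj : Function.Injective x) {y z : V}
    (hy : y ∉ Set.range x) (hz : z ∉ Set.range x) (hzy : G.Adj z y)
    (hfree : ¬ Contains TwoP7 G)
    (hP : ∀ a b : Fin 13, (a : ℕ) + 1 = (b : ℕ) → G.Adj (x a) (x b))
    {j : Fin 13} (hyj : G.Adj y (x j))
    (a : Fin 5 → Fin 13) (b : Fin 7 → Fin 13) (ha0 : a 0 = j)
    (ha : Function.Injective a) (hb : Function.Injective b)
    (hd : ∀ i j, a i ≠ b j)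
    (hca : ∀ i : Fin 4, ((a i.castSucc : ℕ) + 1 = (a i.succ : ℕ)) ∨
      ((a i.succ : ℕ) + 1 = (a i.castSucc : ℕ)))
    {u v u' v' : Fin 13} (he : G.Adj (x u) (x v)) (he' : G.Adj (x u') (x v'))
    (hcb : ∀ i : Fin 6, (((b i.castSucc : ℕ) + 1 = (b i.succ : ℕ)) ∨
      ((b i.succ : ℕ) + 1 = (b i.castSucc : ℕ))) ∨
      ((b i.castSucc = u ∧ b i.succ = v) ∨ (b i.castSucc = v ∧ b i.succ = u)) ∨
      ((b i.castSucc = u' ∧ b i.succ = v') ∨ (b i.castSucc = v' ∧ b i.succ = u'))) :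
    False := by
  apply hfree
  refine contains_twoP7 hinj hy hz hzy a b ha hb hd (ha0 ▸ hyj) ?_ ?_
  · intro i
    rcases hca i with h | h
    · exact hP _ _ h
    · exact (hP _ _ h).symm
  · intro i
    rcases hcb i with (h | h) | (⟨h1, h2⟩ | ⟨h1, h2⟩) | (⟨h1, h2⟩ | ⟨h1, h2⟩)
    · exact hP _ _ h
    · exact (hP _ _ h).symm
    · rw [h1, h2]; exact he
    · rw [h1, h2]; exact he.symm
    · rw [h1, h2]; exact he'
    · rw [h1, h2]; exact he'.symm


lemma count_le {V : Type*} {G : SimpleGraph V} {x : Fin 13 → V}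
    (F : Finset (Sym2 (Fin 13)))
    (hcard : ((Finset.univ.filter fun p : Sym2 (Fin 13) => ¬ p.IsDiag) \ F).card ≤ 68)
    (habs : ∀ a b : Fin 13, s(a, b) ∈ F → ¬ G.Adj (x a) (x b)) :
    ({e : Sym2 V | e ∈ G.edgeSet ∧ ∀ v ∈ e, v ∈ Set.range x}).ncard ≤ 68 := by
  classical
  set D := (Finset.univ.filter fun p : Sym2 (Fin 13) => ¬ p.IsDiag) \ F with hD
  have hsub : {e : Sym2 V | e ∈ G.edgeSet ∧ ∀ v ∈ e, v ∈ Set.range x} ⊆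
      ↑(D.image (Sym2.map x)) := by
    rintro e ⟨he, hv⟩
    induction e with
    | _ u v =>
      obtain ⟨i, rfl⟩ := hv u (Sym2.mem_mk_left u v)
      obtain ⟨j, rfl⟩ := hv _ (Sym2.mem_mk_right _ _)
      have hadj : G.Adj (x i) (x j) := he
      simp only [Finset.coe_image, Set.mem_image, Finset.mem_coe]
      refine ⟨s(i, j), ?_, rfl⟩
      rw [hD, Finset.mem_sdiff, Finset.mem_filter]
      refine ⟨⟨Finset.mem_univ _, ?_⟩, fun hmem => habs i j hmem hadj⟩
      simp only [Sym2.isDiag_iff_proj_eq]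
      exact fun hij => hadj.ne (by rw [hij])
  calc ({e : Sym2 V | e ∈ G.edgeSet ∧ ∀ v ∈ e, v ∈ Set.range x}).ncard
      ≤ (D.image (Sym2.map x)).card := by
        have h2 := Set.ncard_le_ncard hsub (D.image (Sym2.map x)).finite_toSet
        rwa [Set.ncard_coe_finset] at h2
    _ ≤ D.card := Finset.card_image_le
    _ ≤ 68 := hcard


set_option maxHeartbeats 4000000 in
/-- Fact 3: if a non-isolated vertex of `G - P₁₃` hits exactly one vertex of the path, then there are at most 68 edges with both endpoints on the path. -/
theorem stmt12 {V : Type*} [Fintype V] (G : SimpleGraph V) (hfree : ¬ Contains TwoP7 G)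
    (x : Fin 13 → V) (hinj : Function.Injective x)
    (hpath : ∀ i : Fin 12, G.Adj (x i.castSucc) (x i.succ))
    (hy : ∃ y, y ∉ Set.range x ∧ (∃ z, z ∉ Set.range x ∧ G.Adj y z) ∧
      ({v : V | v ∈ Set.range x ∧ G.Adj y v}).ncard = 1) :
    ({e : Sym2 V | e ∈ G.edgeSet ∧ ∀ v ∈ e, v ∈ Set.range x}).ncard ≤ 68 := by
  classical
  obtain ⟨y, hyr, ⟨z, hzr, hyz⟩, hone⟩ := hy
  obtain ⟨v0, hv0⟩ := Set.ncard_eq_one.mp hone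
  have hv0m : v0 ∈ {v : V | v ∈ Set.range x ∧ G.Adj y v} := by rw [hv0]; exact rfl
  obtain ⟨⟨j, rfl⟩, hyj⟩ := hv0m
  have hP : ∀ a b : Fin 13, (a : ℕ) + 1 = (b : ℕ) → G.Adj (x a) (x b) := by
    intro a b h
    have ha : (a : ℕ) < 12 := by omega
    have h2 := hpath ⟨(a : ℕ), ha⟩
    have e1 : ((⟨(a : ℕ), ha⟩ : Fin 12)).castSucc = a := by ext; simp
    have e2 : ((⟨(a : ℕ), ha⟩ : Fin 12)).succ = b := by ext; simp [Fin.val_succ, h]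
    rwa [e1, e2] at h2
  fin_cases j
  · -- j = 0
    exact (no_edge hinj hyr hzr hyz.symm hfree hP hyj ![0,1,2,3,4] ![6,7,8,9,10,11,12] (by decide) (by decide) (by decide) (by decide) (by decide) (hP 0 1 (by decide)) (hP 0 1 (by decide)) (by decide)).elim
  · -- j = 1
    exact (no_edge hinj hyr hzr hyz.symm hfree hP hyj ![1,2,3,4,5] ![6,7,8,9,10,11,12] (by decide) (by decide) (by decide) (by decide) (by decide) (hP 0 1 (by decide)) (hP 0 1 (by decide)) (by decide)).elim
  · -- j = 2
    have n1 : ¬ G.Adj (x 0) (x 7) := fun e =>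
      (no_edge hinj hyr hzr hyz.symm hfree hP hyj ![2,3,4,5,6] ![1,0,7,8,9,10,11] (by decide) (by decide) (by decide) (by decide) (by decide) e e (by decide)).elim
    have n2 : ¬ G.Adj (x 0) (x 8) := fun e =>
      (no_edge hinj hyr hzr hyz.symm hfree hP hyj ![2,3,4,5,6] ![1,0,8,9,10,11,12] (by decide) (by decide) (by decide) (by decide) (by decide) e e (by decide)).elim
    have n3 : ¬ G.Adj (x 0) (x 11) := fun e =>
      (no_edge hinj hyr hzr hyz.symm hfree hP hyj ![2,3,4,5,6] ![1,0,11,10,9,8,7] (by decide) (by decide) (by decide) (by decide) (by decide) e e (by decide)).elim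
    have n4 : ¬ G.Adj (x 0) (x 12) := fun e =>
      (no_edge hinj hyr hzr hyz.symm hfree hP hyj ![2,3,4,5,6] ![1,0,12,11,10,9,8] (by decide) (by decide) (by decide) (by decide) (by decide) e e (by decide)).elim
    have n5 : ¬ G.Adj (x 1) (x 7) := fun e =>
      (no_edge hinj hyr hzr hyz.symm hfree hP hyj ![2,3,4,5,6] ![0,1,7,8,9,10,11] (by decide) (by decide) (by decide) (by decide) (by decide) e e (by decide)).elim
    have n6 : ¬ G.Adj (x 1) (x 8) := fun e =>
      (no_edge hinj hyr hzr hyz.symm hfree hP hyj ![2,3,4,5,6] ![0,1,8,9,10,11,12] (by decide) (by decide) (by decide) (by decide) (by decide) e e (by decide)).elim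
    have n7 : ¬ G.Adj (x 1) (x 11) := fun e =>
      (no_edge hinj hyr hzr hyz.symm hfree hP hyj ![2,3,4,5,6] ![0,1,11,10,9,8,7] (by decide) (by decide) (by decide) (by decide) (by decide) e e (by decide)).elim
    have n8 : ¬ G.Adj (x 1) (x 12) := fun e =>
      (no_edge hinj hyr hzr hyz.symm hfree hP hyj ![2,3,4,5,6] ![0,1,12,11,10,9,8] (by decide) (by decide) (by decide) (by decide) (by decide) e e (by decide)).elim
    by_cases eA : G.Adj (x 0) (x 9)
    · have nA : ¬ G.Adj (x 1) (x 10) := fun e =>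
        (no_edge hinj hyr hzr hyz.symm hfree hP hyj ![2,3,4,5,6] ![8,9,0,1,10,11,12] (by decide) (by decide) (by decide) (by decide) (by decide) eA e (by decide)).elim
      by_cases eB : G.Adj (x 1) (x 9)
      · have nB : ¬ G.Adj (x 0) (x 10) := fun e =>
          (no_edge hinj hyr hzr hyz.symm hfree hP hyj ![2,3,4,5,6] ![8,9,1,0,10,11,12] (by decide) (by decide) (by decide) (by decide) (by decide) eB e (by decide)).elim
        refine count_le (F := ({s(0,7), s(0,8), s(0,11), s(0,12), s(1,7), s(1,8), s(1,11), s(1,12), s(1,10), s(0,10)} : Finset (Sym2 (Fin 13)))) (by decide) ?_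
        intro a b hab
        simp only [Finset.mem_insert, Finset.mem_singleton, Sym2.eq_iff] at hab
        rcases hab with h|h|h|h|h|h|h|h|h|h <;> rcases h with ⟨rfl, rfl⟩ | ⟨rfl, rfl⟩ <;>
          first | exact n1 | exact fun e => n1 e.symm | exact n2 | exact fun e => n2 e.symm | exact n3 | exact fun e => n3 e.symm | exact n4 | exact fun e => n4 e.symm | exact n5 | exact fun e => n5 e.symm | exact n6 | exact fun e => n6 e.symm | exact n7 | exact fun e => n7 e.symm | exact n8 | exact fun e => n8 e.symm | exact nA | exact fun e => nA e.symm | exact nB | exact fun e => nB e.symm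
      · -- eB false: (x 1,x 9) absent
        refine count_le (F := ({s(0,7), s(0,8), s(0,11), s(0,12), s(1,7), s(1,8), s(1,11), s(1,12), s(1,10), s(1,9)} : Finset (Sym2 (Fin 13)))) (by decide) ?_
        intro a b hab
        simp only [Finset.mem_insert, Finset.mem_singleton, Sym2.eq_iff] at hab
        rcases hab with h|h|h|h|h|h|h|h|h|h <;> rcases h with ⟨rfl, rfl⟩ | ⟨rfl, rfl⟩ <;>
          first | exact n1 | exact fun e => n1 e.symm | exact n2 | exact fun e => n2 e.symm | exact n3 | exact fun e => n3 e.symm | exact n4 | exact fun e => n4 e.symm | exact n5 | exact fun e => n5 e.symm | exact n6 | exact fun e => n6 e.symm | exact n7 | exact fun e => n7 e.symm | exact n8 | exact fun e => n8 e.symm | exact nA | exact fun e => nA e.symm | exact eB | exact fun e => eB e.symm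
    · by_cases eB : G.Adj (x 1) (x 9)
      · have nB : ¬ G.Adj (x 0) (x 10) := fun e =>
          (no_edge hinj hyr hzr hyz.symm hfree hP hyj ![2,3,4,5,6] ![8,9,1,0,10,11,12] (by decide) (by decide) (by decide) (by decide) (by decide) eB e (by decide)).elim
        refine count_le (F := ({s(0,7), s(0,8), s(0,11), s(0,12), s(1,7), s(1,8), s(1,11), s(1,12), s(0,9), s(0,10)} : Finset (Sym2 (Fin 13)))) (by decide) ?_
        intro a b hab
        simp only [Finset.mem_insert, Finset.mem_singleton, Sym2.eq_iff] at hab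
        rcases hab with h|h|h|h|h|h|h|h|h|h <;> rcases h with ⟨rfl, rfl⟩ | ⟨rfl, rfl⟩ <;>
          first | exact n1 | exact fun e => n1 e.symm | exact n2 | exact fun e => n2 e.symm | exact n3 | exact fun e => n3 e.symm | exact n4 | exact fun e => n4 e.symm | exact n5 | exact fun e => n5 e.symm | exact n6 | exact fun e => n6 e.symm | exact n7 | exact fun e => n7 e.symm | exact n8 | exact fun e => n8 e.symm | exact eA | exact fun e => eA e.symm | exact nB | exact fun e => nB e.symm
      · -- both eA eB false
        refine count_le (F := ({s(0,7), s(0,8), s(0,11), s(0,12), s(1,7), s(1,8), s(1,11), s(1,12), s(0,9), s(1,9)} : Finset (Sym2 (Fin 13)))) (by decide) ?_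
        intro a b hab
        simp only [Finset.mem_insert, Finset.mem_singleton, Sym2.eq_iff] at hab
        rcases hab with h|h|h|h|h|h|h|h|h|h <;> rcases h with ⟨rfl, rfl⟩ | ⟨rfl, rfl⟩ <;>
          first | exact n1 | exact fun e => n1 e.symm | exact n2 | exact fun e => n2 e.symm | exact n3 | exact fun e => n3 e.symm | exact n4 | exact fun e => n4 e.symm | exact n5 | exact fun e => n5 e.symm | exact n6 | exact fun e => n6 e.symm | exact n7 | exact fun e => n7 e.symm | exact n8 | exact fun e => n8 e.symm | exact eA | exact fun e => eA e.symm | exact eB | exact fun e => eB e.symm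
  · -- j = 3
    have n1 : ¬ G.Adj (x 2) (x 8) := fun e =>
      (no_edge hinj hyr hzr hyz.symm hfree hP hyj ![3,4,5,6,7] ![0,1,2,8,9,10,11] (by decide) (by decide) (by decide) (by decide) (by decide) e e (by decide)).elim
    have n2 : ¬ G.Adj (x 2) (x 9) := fun e =>
      (no_edge hinj hyr hzr hyz.symm hfree hP hyj ![3,4,5,6,7] ![0,1,2,9,10,11,12] (by decide) (by decide) (by decide) (by decide) (by decide) e e (by decide)).elim
    have n3 : ¬ G.Adj (x 2) (x 11) := fun e =>
      (no_edge hinj hyr hzr hyz.symm hfree hP hyj ![3,4,5,6,7] ![0,1,2,11,10,9,8] (by decide) (by decide) (by decide) (by decide) (by decide) e e (by decide)).elim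
    have n4 : ¬ G.Adj (x 2) (x 12) := fun e =>
      (no_edge hinj hyr hzr hyz.symm hfree hP hyj ![3,4,5,6,7] ![0,1,2,12,11,10,9] (by decide) (by decide) (by decide) (by decide) (by decide) e e (by decide)).elim
    have n5 : ¬ G.Adj (x 1) (x 8) := fun e =>
      (no_edge hinj hyr hzr hyz.symm hfree hP hyj ![3,4,5,6,7] ![0,1,8,9,10,11,12] (by decide) (by decide) (by decide) (by decide) (by decide) e e (by decide)).elim
    have n6 : ¬ G.Adj (x 1) (x 12) := fun e =>
      (no_edge hinj hyr hzr hyz.symm hfree hP hyj ![3,4,5,6,7] ![0,1,12,11,10,9,8] (by decide) (by decide) (by decide) (by decide) (by decide) e e (by decide)).elim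
    have n7 : ¬ G.Adj (x 0) (x 8) := fun e =>
      (no_edge hinj hyr hzr hyz.symm hfree hP hyj ![3,4,5,6,7] ![1,0,8,9,10,11,12] (by decide) (by decide) (by decide) (by decide) (by decide) e e (by decide)).elim
    have n8 : ¬ G.Adj (x 0) (x 9) := fun e =>
      (no_edge hinj hyr hzr hyz.symm hfree hP hyj ![3,4,5,6,7] ![2,1,0,9,10,11,12] (by decide) (by decide) (by decide) (by decide) (by decide) e e (by decide)).elim
    have n9 : ¬ G.Adj (x 0) (x 11) := fun e =>
      (no_edge hinj hyr hzr hyz.symm hfree hP hyj ![3,4,5,6,7] ![2,1,0,11,10,9,8] (by decide) (by decide) (by decide) (by decide) (by decide) e e (by decide)).elim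
    have n10 : ¬ G.Adj (x 0) (x 12) := fun e =>
      (no_edge hinj hyr hzr hyz.symm hfree hP hyj ![3,4,5,6,7] ![1,0,12,11,10,9,8] (by decide) (by decide) (by decide) (by decide) (by decide) e e (by decide)).elim
    refine count_le (F := ({s(2,8), s(2,9), s(2,11), s(2,12), s(1,8), s(1,12), s(0,8), s(0,9), s(0,11), s(0,12)} : Finset (Sym2 (Fin 13)))) (by decide) ?_
    intro a b hab
    simp only [Finset.mem_insert, Finset.mem_singleton, Sym2.eq_iff] at hab
    rcases hab with h|h|h|h|h|h|h|h|h|h <;> rcases h with ⟨rfl, rfl⟩ | ⟨rfl, rfl⟩ <;>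
      first | exact n1 | exact fun e => n1 e.symm | exact n2 | exact fun e => n2 e.symm | exact n3 | exact fun e => n3 e.symm | exact n4 | exact fun e => n4 e.symm | exact n5 | exact fun e => n5 e.symm | exact n6 | exact fun e => n6 e.symm | exact n7 | exact fun e => n7 e.symm | exact n8 | exact fun e => n8 e.symm | exact n9 | exact fun e => n9 e.symm | exact n10 | exact fun e => n10 e.symm
  · -- j = 4
    exact (no_edge hinj hyr hzr hyz.symm hfree hP hyj ![4,3,2,1,0] ![5,6,7,8,9,10,11] (by decide) (by decide) (by decide) (by decide) (by decide) (hP 0 1 (by decide)) (hP 0 1 (by decide)) (by decide)).elim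
  · -- j = 5
    exact (no_edge hinj hyr hzr hyz.symm hfree hP hyj ![5,4,3,2,1] ![6,7,8,9,10,11,12] (by decide) (by decide) (by decide) (by decide) (by decide) (hP 0 1 (by decide)) (hP 0 1 (by decide)) (by decide)).elim
  · -- j = 6
    have n1 : ¬ G.Adj (x 0) (x 7) := fun e =>
      (no_edge hinj hyr hzr hyz.symm hfree hP hyj ![6,5,4,3,2] ![1,0,7,8,9,10,11] (by decide) (by decide) (by decide) (by decide) (by decide) e e (by decide)).elim
    have n2 : ¬ G.Adj (x 0) (x 8) := fun e =>
      (no_edge hinj hyr hzr hyz.symm hfree hP hyj ![6,5,4,3,2] ![1,0,8,9,10,11,12] (by decide) (by decide) (by decide) (by decide) (by decide) e e (by decide)).elim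
    have n3 : ¬ G.Adj (x 0) (x 11) := fun e =>
      (no_edge hinj hyr hzr hyz.symm hfree hP hyj ![6,5,4,3,2] ![1,0,11,10,9,8,7] (by decide) (by decide) (by decide) (by decide) (by decide) e e (by decide)).elim
    have n4 : ¬ G.Adj (x 0) (x 12) := fun e =>
      (no_edge hinj hyr hzr hyz.symm hfree hP hyj ![6,5,4,3,2] ![1,0,12,11,10,9,8] (by decide) (by decide) (by decide) (by decide) (by decide) e e (by decide)).elim
    have n5 : ¬ G.Adj (x 1) (x 7) := fun e =>
      (no_edge hinj hyr hzr hyz.symm hfree hP hyj ![6,5,4,3,2] ![0,1,7,8,9,10,11] (by decide) (by decide) (by decide) (by decide) (by decide) e e (by decide)).elim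
    have n6 : ¬ G.Adj (x 1) (x 8) := fun e =>
      (no_edge hinj hyr hzr hyz.symm hfree hP hyj ![6,5,4,3,2] ![0,1,8,9,10,11,12] (by decide) (by decide) (by decide) (by decide) (by decide) e e (by decide)).elim
    have n7 : ¬ G.Adj (x 1) (x 11) := fun e =>
      (no_edge hinj hyr hzr hyz.symm hfree hP hyj ![6,5,4,3,2] ![0,1,11,10,9,8,7] (by decide) (by decide) (by decide) (by decide) (by decide) e e (by decide)).elim
    have n8 : ¬ G.Adj (x 1) (x 12) := fun e =>
      (no_edge hinj hyr hzr hyz.symm hfree hP hyj ![6,5,4,3,2] ![0,1,12,11,10,9,8] (by decide) (by decide) (by decide) (by decide) (by decide) e e (by decide)).elim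
    have n9 : ¬ G.Adj (x 4) (x 11) := fun e =>
      (no_edge hinj hyr hzr hyz.symm hfree hP hyj ![6,7,8,9,10] ![12,11,4,3,2,1,0] (by decide) (by decide) (by decide) (by decide) (by decide) e e (by decide)).elim
    have n10 : ¬ G.Adj (x 5) (x 11) := fun e =>
      (no_edge hinj hyr hzr hyz.symm hfree hP hyj ![6,7,8,9,10] ![12,11,5,4,3,2,1] (by decide) (by decide) (by decide) (by decide) (by decide) e e (by decide)).elim
    have n11 : ¬ G.Adj (x 4) (x 12) := fun e =>
      (no_edge hinj hyr hzr hyz.symm hfree hP hyj ![6,7,8,9,10] ![11,12,4,3,2,1,0] (by decide) (by decide) (by decide) (by decide) (by decide) e e (by decide)).elim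
    have n12 : ¬ G.Adj (x 5) (x 12) := fun e =>
      (no_edge hinj hyr hzr hyz.symm hfree hP hyj ![6,7,8,9,10] ![11,12,5,4,3,2,1] (by decide) (by decide) (by decide) (by decide) (by decide) e e (by decide)).elim
    refine count_le (F := ({s(0,7), s(0,8), s(0,11), s(0,12), s(1,7), s(1,8), s(1,11), s(1,12), s(4,11), s(5,11), s(4,12), s(5,12)} : Finset (Sym2 (Fin 13)))) (by decide) ?_
    intro a b hab
    simp only [Finset.mem_insert, Finset.mem_singleton, Sym2.eq_iff] at hab
    rcases hab with h|h|h|h|h|h|h|h|h|h|h|h <;> rcases h with ⟨rfl, rfl⟩ | ⟨rfl, rfl⟩ <;>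
      first | exact n1 | exact fun e => n1 e.symm | exact n2 | exact fun e => n2 e.symm | exact n3 | exact fun e => n3 e.symm | exact n4 | exact fun e => n4 e.symm | exact n5 | exact fun e => n5 e.symm | exact n6 | exact fun e => n6 e.symm | exact n7 | exact fun e => n7 e.symm | exact n8 | exact fun e => n8 e.symm | exact n9 | exact fun e => n9 e.symm | exact n10 | exact fun e => n10 e.symm | exact n11 | exact fun e => n11 e.symm | exact n12 | exact fun e => n12 e.symm
  · -- j = 7
    exact (no_edge hinj hyr hzr hyz.symm hfree hP hyj ![7,8,9,10,11] ![0,1,2,3,4,5,6] (by decide) (by decide) (by decide) (by decide) (by decide) (hP 0 1 (by decide)) (hP 0 1 (by decide)) (by decide)).elim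
  · -- j = 8
    exact (no_edge hinj hyr hzr hyz.symm hfree hP hyj ![8,9,10,11,12] ![0,1,2,3,4,5,6] (by decide) (by decide) (by decide) (by decide) (by decide) (hP 0 1 (by decide)) (hP 0 1 (by decide)) (by decide)).elim
  · -- j = 9
    have n1 : ¬ G.Adj (x 10) (x 4) := fun e =>
      (no_edge hinj hyr hzr hyz.symm hfree hP hyj ![9,8,7,6,5] ![12,11,10,4,3,2,1] (by decide) (by decide) (by decide) (by decide) (by decide) e e (by decide)).elim
    have n2 : ¬ G.Adj (x 10) (x 3) := fun e =>
      (no_edge hinj hyr hzr hyz.symm hfree hP hyj ![9,8,7,6,5] ![12,11,10,3,2,1,0] (by decide) (by decide) (by decide) (by decide) (by decide) e e (by decide)).elim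
    have n3 : ¬ G.Adj (x 10) (x 1) := fun e =>
      (no_edge hinj hyr hzr hyz.symm hfree hP hyj ![9,8,7,6,5] ![12,11,10,1,2,3,4] (by decide) (by decide) (by decide) (by decide) (by decide) e e (by decide)).elim
    have n4 : ¬ G.Adj (x 10) (x 0) := fun e =>
      (no_edge hinj hyr hzr hyz.symm hfree hP hyj ![9,8,7,6,5] ![12,11,10,0,1,2,3] (by decide) (by decide) (by decide) (by decide) (by decide) e e (by decide)).elim
    have n5 : ¬ G.Adj (x 11) (x 4) := fun e =>
      (no_edge hinj hyr hzr hyz.symm hfree hP hyj ![9,8,7,6,5] ![12,11,4,3,2,1,0] (by decide) (by decide) (by decide) (by decide) (by decide) e e (by decide)).elim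
    have n6 : ¬ G.Adj (x 11) (x 0) := fun e =>
      (no_edge hinj hyr hzr hyz.symm hfree hP hyj ![9,8,7,6,5] ![12,11,0,1,2,3,4] (by decide) (by decide) (by decide) (by decide) (by decide) e e (by decide)).elim
    have n7 : ¬ G.Adj (x 12) (x 4) := fun e =>
      (no_edge hinj hyr hzr hyz.symm hfree hP hyj ![9,8,7,6,5] ![11,12,4,3,2,1,0] (by decide) (by decide) (by decide) (by decide) (by decide) e e (by decide)).elim
    have n8 : ¬ G.Adj (x 12) (x 3) := fun e =>
      (no_edge hinj hyr hzr hyz.symm hfree hP hyj ![9,8,7,6,5] ![10,11,12,3,2,1,0] (by decide) (by decide) (by decide) (by decide) (by decide) e e (by decide)).elim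
    have n9 : ¬ G.Adj (x 12) (x 1) := fun e =>
      (no_edge hinj hyr hzr hyz.symm hfree hP hyj ![9,8,7,6,5] ![10,11,12,1,2,3,4] (by decide) (by decide) (by decide) (by decide) (by decide) e e (by decide)).elim
    have n10 : ¬ G.Adj (x 12) (x 0) := fun e =>
      (no_edge hinj hyr hzr hyz.symm hfree hP hyj ![9,8,7,6,5] ![11,12,0,1,2,3,4] (by decide) (by decide) (by decide) (by decide) (by decide) e e (by decide)).elim
    refine count_le (F := ({s(10,4), s(10,3), s(10,1), s(10,0), s(11,4), s(11,0), s(12,4), s(12,3), s(12,1), s(12,0)} : Finset (Sym2 (Fin 13)))) (by decide) ?_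
    intro a b hab
    simp only [Finset.mem_insert, Finset.mem_singleton, Sym2.eq_iff] at hab
    rcases hab with h|h|h|h|h|h|h|h|h|h <;> rcases h with ⟨rfl, rfl⟩ | ⟨rfl, rfl⟩ <;>
      first | exact n1 | exact fun e => n1 e.symm | exact n2 | exact fun e => n2 e.symm | exact n3 | exact fun e => n3 e.symm | exact n4 | exact fun e => n4 e.symm | exact n5 | exact fun e => n5 e.symm | exact n6 | exact fun e => n6 e.symm | exact n7 | exact fun e => n7 e.symm | exact n8 | exact fun e => n8 e.symm | exact n9 | exact fun e => n9 e.symm | exact n10 | exact fun e => n10 e.symm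
  · -- j = 10
    have n1 : ¬ G.Adj (x 12) (x 5) := fun e =>
      (no_edge hinj hyr hzr hyz.symm hfree hP hyj ![10,9,8,7,6] ![11,12,5,4,3,2,1] (by decide) (by decide) (by decide) (by decide) (by decide) e e (by decide)).elim
    have n2 : ¬ G.Adj (x 12) (x 4) := fun e =>
      (no_edge hinj hyr hzr hyz.symm hfree hP hyj ![10,9,8,7,6] ![11,12,4,3,2,1,0] (by decide) (by decide) (by decide) (by decide) (by decide) e e (by decide)).elim
    have n3 : ¬ G.Adj (x 12) (x 1) := fun e =>
      (no_edge hinj hyr hzr hyz.symm hfree hP hyj ![10,9,8,7,6] ![11,12,1,2,3,4,5] (by decide) (by decide) (by decide) (by decide) (by decide) e e (by decide)).elim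
    have n4 : ¬ G.Adj (x 12) (x 0) := fun e =>
      (no_edge hinj hyr hzr hyz.symm hfree hP hyj ![10,9,8,7,6] ![11,12,0,1,2,3,4] (by decide) (by decide) (by decide) (by decide) (by decide) e e (by decide)).elim
    have n5 : ¬ G.Adj (x 11) (x 5) := fun e =>
      (no_edge hinj hyr hzr hyz.symm hfree hP hyj ![10,9,8,7,6] ![12,11,5,4,3,2,1] (by decide) (by decide) (by decide) (by decide) (by decide) e e (by decide)).elim
    have n6 : ¬ G.Adj (x 11) (x 4) := fun e =>
      (no_edge hinj hyr hzr hyz.symm hfree hP hyj ![10,9,8,7,6] ![12,11,4,3,2,1,0] (by decide) (by decide) (by decide) (by decide) (by decide) e e (by decide)).elim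
    have n7 : ¬ G.Adj (x 11) (x 1) := fun e =>
      (no_edge hinj hyr hzr hyz.symm hfree hP hyj ![10,9,8,7,6] ![12,11,1,2,3,4,5] (by decide) (by decide) (by decide) (by decide) (by decide) e e (by decide)).elim
    have n8 : ¬ G.Adj (x 11) (x 0) := fun e =>
      (no_edge hinj hyr hzr hyz.symm hfree hP hyj ![10,9,8,7,6] ![12,11,0,1,2,3,4] (by decide) (by decide) (by decide) (by decide) (by decide) e e (by decide)).elim
    by_cases eA : G.Adj (x 12) (x 3)
    · have nA : ¬ G.Adj (x 11) (x 2) := fun e =>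
        (no_edge hinj hyr hzr hyz.symm hfree hP hyj ![10,9,8,7,6] ![4,3,12,11,2,1,0] (by decide) (by decide) (by decide) (by decide) (by decide) eA e (by decide)).elim
      by_cases eB : G.Adj (x 11) (x 3)
      · have nB : ¬ G.Adj (x 12) (x 2) := fun e =>
          (no_edge hinj hyr hzr hyz.symm hfree hP hyj ![10,9,8,7,6] ![4,3,11,12,2,1,0] (by decide) (by decide) (by decide) (by decide) (by decide) eB e (by decide)).elim
        refine count_le (F := ({s(12,5), s(12,4), s(12,1), s(12,0), s(11,5), s(11,4), s(11,1), s(11,0), s(11,2), s(12,2)} : Finset (Sym2 (Fin 13)))) (by decide) ?_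
        intro a b hab
        simp only [Finset.mem_insert, Finset.mem_singleton, Sym2.eq_iff] at hab
        rcases hab with h|h|h|h|h|h|h|h|h|h <;> rcases h with ⟨rfl, rfl⟩ | ⟨rfl, rfl⟩ <;>
          first | exact n1 | exact fun e => n1 e.symm | exact n2 | exact fun e => n2 e.symm | exact n3 | exact fun e => n3 e.symm | exact n4 | exact fun e => n4 e.symm | exact n5 | exact fun e => n5 e.symm | exact n6 | exact fun e => n6 e.symm | exact n7 | exact fun e => n7 e.symm | exact n8 | exact fun e => n8 e.symm | exact nA | exact fun e => nA e.symm | exact nB | exact fun e => nB e.symm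
      · -- eB false: (x 11,x 3) absent
        refine count_le (F := ({s(12,5), s(12,4), s(12,1), s(12,0), s(11,5), s(11,4), s(11,1), s(11,0), s(11,2), s(11,3)} : Finset (Sym2 (Fin 13)))) (by decide) ?_
        intro a b hab
        simp only [Finset.mem_insert, Finset.mem_singleton, Sym2.eq_iff] at hab
        rcases hab with h|h|h|h|h|h|h|h|h|h <;> rcases h with ⟨rfl, rfl⟩ | ⟨rfl, rfl⟩ <;>
          first | exact n1 | exact fun e => n1 e.symm | exact n2 | exact fun e => n2 e.symm | exact n3 | exact fun e => n3 e.symm | exact n4 | exact fun e => n4 e.symm | exact n5 | exact fun e => n5 e.symm | exact n6 | exact fun e => n6 e.symm | exact n7 | exact fun e => n7 e.symm | exact n8 | exact fun e => n8 e.symm | exact nA | exact fun e => nA e.symm | exact eB | exact fun e => eB e.symm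
    · by_cases eB : G.Adj (x 11) (x 3)
      · have nB : ¬ G.Adj (x 12) (x 2) := fun e =>
          (no_edge hinj hyr hzr hyz.symm hfree hP hyj ![10,9,8,7,6] ![4,3,11,12,2,1,0] (by decide) (by decide) (by decide) (by decide) (by decide) eB e (by decide)).elim
        refine count_le (F := ({s(12,5), s(12,4), s(12,1), s(12,0), s(11,5), s(11,4), s(11,1), s(11,0), s(12,3), s(12,2)} : Finset (Sym2 (Fin 13)))) (by decide) ?_
        intro a b hab
        simp only [Finset.mem_insert, Finset.mem_singleton, Sym2.eq_iff] at hab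
        rcases hab with h|h|h|h|h|h|h|h|h|h <;> rcases h with ⟨rfl, rfl⟩ | ⟨rfl, rfl⟩ <;>
          first | exact n1 | exact fun e => n1 e.symm | exact n2 | exact fun e => n2 e.symm | exact n3 | exact fun e => n3 e.symm | exact n4 | exact fun e => n4 e.symm | exact n5 | exact fun e => n5 e.symm | exact n6 | exact fun e => n6 e.symm | exact n7 | exact fun e => n7 e.symm | exact n8 | exact fun e => n8 e.symm | exact eA | exact fun e => eA e.symm | exact nB | exact fun e => nB e.symm
      · -- both eA eB false
        refine count_le (F := ({s(12,5), s(12,4), s(12,1), s(12,0), s(11,5), s(11,4), s(11,1), s(11,0), s(12,3), s(11,3)} : Finset (Sym2 (Fin 13)))) (by decide) ?_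
        intro a b hab
        simp only [Finset.mem_insert, Finset.mem_singleton, Sym2.eq_iff] at hab
        rcases hab with h|h|h|h|h|h|h|h|h|h <;> rcases h with ⟨rfl, rfl⟩ | ⟨rfl, rfl⟩ <;>
          first | exact n1 | exact fun e => n1 e.symm | exact n2 | exact fun e => n2 e.symm | exact n3 | exact fun e => n3 e.symm | exact n4 | exact fun e => n4 e.symm | exact n5 | exact fun e => n5 e.symm | exact n6 | exact fun e => n6 e.symm | exact n7 | exact fun e => n7 e.symm | exact n8 | exact fun e => n8 e.symm | exact eA | exact fun e => eA e.symm | exact eB | exact fun e => eB e.symm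
  · -- j = 11
    exact (no_edge hinj hyr hzr hyz.symm hfree hP hyj ![11,10,9,8,7] ![0,1,2,3,4,5,6] (by decide) (by decide) (by decide) (by decide) (by decide) (hP 0 1 (by decide)) (hP 0 1 (by decide)) (by decide)).elim
  · -- j = 12
    exact (no_edge hinj hyr hzr hyz.symm hfree hP hyj ![12,11,10,9,8] ![0,1,2,3,4,5,6] (by decide) (by decide) (by decide) (by decide) (by decide) (hP 0 1 (by decide)) (hP 0 1 (by decide)) (by decide)).elim
end

section
/- Let G be a 2P₇-free graph and let x₁x₂…x₁₃ be a path in G on 13 distinct vertices. Suppose some vertex outside {x₁,…,x₁₃} is adjacent to x_i with 6 ≤ i ≤ 12. Then for every j with 1 ≤ j ≤ i − 2, it is not the case that both x₁₃x_j and x_{i+1}x_{j+1} are edges of G. -/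
open SimpleGraph

lemma contains_two_paths {V : Type*} {G : SimpleGraph V} (z : Fin 14 → V)
    (hz : Function.Injective z) (f g : ℕ → ℕ)
    (hf13 : ∀ k, k < 7 → f k < 14) (hg13 : ∀ k, k < 7 → g k < 14)
    (hfinj : ∀ k l, k < 7 → l < 7 → f k = f l → k = l)
    (hginj : ∀ k l, k < 7 → l < 7 → g k = g l → k = l)
    (hfg : ∀ k l, k < 7 → l < 7 → f k ≠ g l)
    (hfa : ∀ k, k < 6 → ∀ (h1 : f k < 14) (h2 : f (k+1) < 14),
      G.Adj (z ⟨f k, h1⟩) (z ⟨f (k+1), h2⟩))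
    (hga : ∀ k, k < 6 → ∀ (h1 : g k < 14) (h2 : g (k+1) < 14),
      G.Adj (z ⟨g k, h1⟩) (z ⟨g (k+1), h2⟩)) :
    Contains TwoP7 G := by
  refine ⟨⟨Sum.elim (fun k : Fin 7 => z ⟨f k.val, hf13 _ k.isLt⟩)
      (fun k : Fin 7 => z ⟨g k.val, hg13 _ k.isLt⟩), ?_⟩, ?_⟩
  · rintro (u | u) (v | v) h <;>
      simp only [TwoP7, SimpleGraph.sum_adj] at h <;>
      simp only [Sum.elim_inl, Sum.elim_inr]
    · rw [pathGraph_adj] at h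
      rcases h with h | h
      · have hv : v = ⟨u.val + 1, by omega⟩ := Fin.ext h.symm
        rw [hv]; exact hfa u.val (by omega) _ _
      · have hu : u = ⟨v.val + 1, by omega⟩ := Fin.ext h.symm
        rw [hu]; exact (hfa v.val (by omega) _ _).symm
    · rw [pathGraph_adj] at h
      rcases h with h | h
      · have hv : v = ⟨u.val + 1, by omega⟩ := Fin.ext h.symm
        rw [hv]; exact hga u.val (by omega) _ _
      · have hu : u = ⟨v.val + 1, by omega⟩ := Fin.ext h.symm
        rw [hu]; exact (hga v.val (by omega) _ _).symm
  · rintro (u | u) (v | v) h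
    · exact congrArg Sum.inl (Fin.ext (hfinj _ _ u.isLt v.isLt (by simpa using hz h)))
    · exact absurd (show f u.val = g v.val by simpa using hz h) (hfg _ _ u.isLt v.isLt)
    · exact absurd (show f v.val = g u.val by simpa using hz h.symm) (hfg _ _ v.isLt u.isLt)
    · exact congrArg Sum.inr (Fin.ext (hginj _ _ u.isLt v.isLt (by simpa using hz h)))

set_option maxHeartbeats 1600000 in
lemma stmt18_case1 {V : Type*} {G : SimpleGraph V} (hfree : ¬ Contains TwoP7 G)
    (z : Fin 14 → V) (hz : Function.Injective z)
    (i j : ℕ) (hi₁ : 6 ≤ i) (hi₂ : i ≤ 12) (hj₁ : 1 ≤ j) (hj₂ : j ≤ i - 2)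
    (hAdj : ∀ s t (hs : s < 14) (ht : t < 14),
      ((s < 13 ∧ t < 13 ∧ (t = s + 1 ∨ s = t + 1))
        ∨ (s = j - 1 ∧ t = 12) ∨ (t = j - 1 ∧ s = 12)
        ∨ (s = j ∧ t = i) ∨ (t = j ∧ s = i)
        ∨ (s = 13 ∧ t = i - 1) ∨ (t = 13 ∧ s = i - 1)) →
      G.Adj (z ⟨s, hs⟩) (z ⟨t, ht⟩))
    (hc : j + 6 ≤ i) : False := by
  refine hfree (contains_two_paths z hz
      (fun k => if k < j then k else if k < j + 13 - i then 12 - (k - j) else k - (13 - i))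
      (fun k => if k = 0 then 13 else i - k) ?_ ?_ ?_ ?_ ?_ ?_ ?_)
  · intro k hk; beta_reduce; interval_cases i <;> interval_cases j <;> interval_cases k <;> first | exact absurd hc (by decide) | decide
  · intro k hk; beta_reduce; interval_cases i <;> interval_cases j <;> interval_cases k <;> first | exact absurd hc (by decide) | decide
  · intro k l hk hl h; revert h; beta_reduce; interval_cases i <;> interval_cases j <;> interval_cases k <;> interval_cases l <;> first | exact absurd hc (by decide) | decide
  · intro k l hk hl h; revert h; beta_reduce; interval_cases i <;> interval_cases j <;> interval_cases k <;> interval_cases l <;> first | exact absurd hc (by decide) | decide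
  · intro k l hk hl h; revert h; beta_reduce; interval_cases i <;> interval_cases j <;> interval_cases k <;> interval_cases l <;> first | exact absurd hc (by decide) | decide
  · intro k hk h1 h2; refine hAdj _ _ h1 h2 ?_; beta_reduce; interval_cases i <;> interval_cases j <;> interval_cases k <;> first | exact absurd hc (by decide) | decide
  · intro k hk h1 h2; refine hAdj _ _ h1 h2 ?_; beta_reduce; interval_cases i <;> interval_cases j <;> interval_cases k <;> first | exact absurd hc (by decide) | decide

set_option maxHeartbeats 1600000 in
lemma stmt18_case2 {V : Type*} {G : SimpleGraph V} (hfree : ¬ Contains TwoP7 G)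
    (z : Fin 14 → V) (hz : Function.Injective z)
    (i j : ℕ) (hi₁ : 6 ≤ i) (hi₂ : i ≤ 12) (hj₁ : 1 ≤ j) (hj₂ : j ≤ i - 2)
    (hAdj : ∀ s t (hs : s < 14) (ht : t < 14),
      ((s < 13 ∧ t < 13 ∧ (t = s + 1 ∨ s = t + 1))
        ∨ (s = j - 1 ∧ t = 12) ∨ (t = j - 1 ∧ s = 12)
        ∨ (s = j ∧ t = i) ∨ (t = j ∧ s = i)
        ∨ (s = 13 ∧ t = i - 1) ∨ (t = 13 ∧ s = i - 1)) →
      G.Adj (z ⟨s, hs⟩) (z ⟨t, ht⟩))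
    (hc : i ≤ j + 5 ∧ j ≤ 7) : False := by
  refine hfree (contains_two_paths z hz
      (fun k => if k < j then k else 12 + j - k)
      (fun k => if k = 0 then 13 else if k ≤ i - j then i - k else j + k - 1) ?_ ?_ ?_ ?_ ?_ ?_ ?_)
  · intro k hk; beta_reduce; interval_cases i <;> interval_cases j <;> interval_cases k <;> first | exact absurd hc (by decide) | decide
  · intro k hk; beta_reduce; interval_cases i <;> interval_cases j <;> interval_cases k <;> first | exact absurd hc (by decide) | decide
  · intro k l hk hl h; revert h; beta_reduce; interval_cases i <;> interval_cases j <;> interval_cases k <;> interval_cases l <;> first | exact absurd hc (by decide) | decide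
  · intro k l hk hl h; revert h; beta_reduce; interval_cases i <;> interval_cases j <;> interval_cases k <;> interval_cases l <;> first | exact absurd hc (by decide) | decide
  · intro k l hk hl h; revert h; beta_reduce; interval_cases i <;> interval_cases j <;> interval_cases k <;> interval_cases l <;> first | exact absurd hc (by decide) | decide
  · intro k hk h1 h2; refine hAdj _ _ h1 h2 ?_; beta_reduce; interval_cases i <;> interval_cases j <;> interval_cases k <;> first | exact absurd hc (by decide) | decide
  · intro k hk h1 h2; refine hAdj _ _ h1 h2 ?_; beta_reduce; interval_cases i <;> interval_cases j <;> interval_cases k <;> first | exact absurd hc (by decide) | decide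

set_option maxHeartbeats 1600000 in
lemma stmt18_case3 {V : Type*} {G : SimpleGraph V} (hfree : ¬ Contains TwoP7 G)
    (z : Fin 14 → V) (hz : Function.Injective z)
    (i j : ℕ) (hi₁ : 6 ≤ i) (hi₂ : i ≤ 12) (hj₁ : 1 ≤ j) (hj₂ : j ≤ i - 2)
    (hAdj : ∀ s t (hs : s < 14) (ht : t < 14),
      ((s < 13 ∧ t < 13 ∧ (t = s + 1 ∨ s = t + 1))
        ∨ (s = j - 1 ∧ t = 12) ∨ (t = j - 1 ∧ s = 12)
        ∨ (s = j ∧ t = i) ∨ (t = j ∧ s = i)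
        ∨ (s = 13 ∧ t = i - 1) ∨ (t = 13 ∧ s = i - 1)) →
      G.Adj (z ⟨s, hs⟩) (z ⟨t, ht⟩))
    (hc : 8 ≤ j) : False := by
  refine hfree (contains_two_paths z hz
      (fun k => k)
      (fun k => if k = 0 then 13 else if k ≤ i - j then i - k else if k ≤ 13 - j then j + k - 1 else 13 - k) ?_ ?_ ?_ ?_ ?_ ?_ ?_)
  · intro k hk; beta_reduce; interval_cases i <;> interval_cases j <;> interval_cases k <;> first | exact absurd hc (by decide) | decide
  · intro k hk; beta_reduce; interval_cases i <;> interval_cases j <;> interval_cases k <;> first | exact absurd hc (by decide) | decide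
  · intro k l hk hl h; revert h; beta_reduce; interval_cases i <;> interval_cases j <;> interval_cases k <;> interval_cases l <;> first | exact absurd hc (by decide) | decide
  · intro k l hk hl h; revert h; beta_reduce; interval_cases i <;> interval_cases j <;> interval_cases k <;> interval_cases l <;> first | exact absurd hc (by decide) | decide
  · intro k l hk hl h; revert h; beta_reduce; interval_cases i <;> interval_cases j <;> interval_cases k <;> interval_cases l <;> first | exact absurd hc (by decide) | decide
  · intro k hk h1 h2; refine hAdj _ _ h1 h2 ?_; beta_reduce; interval_cases i <;> interval_cases j <;> interval_cases k <;> first | exact absurd hc (by decide) | decide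
  · intro k hk h1 h2; refine hAdj _ _ h1 h2 ?_; beta_reduce; interval_cases i <;> interval_cases j <;> interval_cases k <;> first | exact absurd hc (by decide) | decide

lemma stmt18_aux {V : Type*} {G : SimpleGraph V} (hfree : ¬ Contains TwoP7 G)
    (z : Fin 14 → V) (hz : Function.Injective z)
    (i j : ℕ) (hi₁ : 6 ≤ i) (hi₂ : i ≤ 12) (hj₁ : 1 ≤ j) (hj₂ : j ≤ i - 2)
    (hAdj : ∀ s t (hs : s < 14) (ht : t < 14),
      ((s < 13 ∧ t < 13 ∧ (t = s + 1 ∨ s = t + 1))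
        ∨ (s = j - 1 ∧ t = 12) ∨ (t = j - 1 ∧ s = 12)
        ∨ (s = j ∧ t = i) ∨ (t = j ∧ s = i)
        ∨ (s = 13 ∧ t = i - 1) ∨ (t = 13 ∧ s = i - 1)) →
      G.Adj (z ⟨s, hs⟩) (z ⟨t, ht⟩)) : False := by
  rcases (show j + 6 ≤ i ∨ (i ≤ j + 5 ∧ j ≤ 7) ∨ 8 ≤ j by omega) with hc | hc | hc
  · exact stmt18_case1 hfree z hz i j hi₁ hi₂ hj₁ hj₂ hAdj hc
  · exact stmt18_case2 hfree z hz i j hi₁ hi₂ hj₁ hj₂ hAdj hc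
  · exact stmt18_case3 hfree z hz i j hi₁ hi₂ hj₁ hj₂ hAdj hc


/-- If some vertex outside the 13-vertex path `x₁x₂…x₁₃` of a `2P₇`-free graph is
adjacent to `x_i` with `6 ≤ i ≤ 12` (1-based), then for every `j` with
`1 ≤ j ≤ i - 2`, not both `x₁₃x_j` and `x_{i+1}x_{j+1}` are edges.
(The function `x` is 0-based: `x ⟨i-1, _⟩` is the paper's `x_i`.) -/
theorem stmt18 {V : Type*} (G : SimpleGraph V) (hfree : ¬ Contains TwoP7 G)
    (x : Fin 13 → V) (hinj : Function.Injective x)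
    (hpath : ∀ i : Fin 12, G.Adj (x i.castSucc) (x i.succ))
    (i : ℕ) (hi₁ : 6 ≤ i) (hi₂ : i ≤ 12)
    (hhit : ∃ y, y ∉ Set.range x ∧ G.Adj y (x ⟨i - 1, by omega⟩))
    (j : ℕ) (hj₁ : 1 ≤ j) (hj₂ : j ≤ i - 2) :
    ¬ (G.Adj (x 12) (x ⟨j - 1, by omega⟩) ∧ G.Adj (x ⟨i, by omega⟩) (x ⟨j, by omega⟩)) := by
  rintro ⟨e1, e2⟩
  obtain ⟨y, hy, hyx⟩ := hhit
  refine stmt18_aux hfree (fun k => if h : k.val < 13 then x ⟨k.val, h⟩ else y) ?_ i j hi₁ hi₂ hj₁ hj₂ ?_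
  · intro a b hab
    beta_reduce at hab
    split_ifs at hab with h1 h2 h2
    · have := hinj hab
      simp only [Fin.mk.injEq] at this
      exact Fin.ext (by omega)
    · exact absurd ⟨_, hab⟩ hy
    · exact absurd ⟨_, hab.symm⟩ hy
    · have := a.isLt; have := b.isLt; exact Fin.ext (by omega)
  · intro s t hs ht hd
    beta_reduce
    rcases hd with ⟨h1, h2, h3 | h3⟩ | hd | hd | hd | hd | hd | hd
    · rw [dif_pos h1, dif_pos h2]
      subst h3
      exact hpath ⟨s, by omega⟩
    · rw [dif_pos h1, dif_pos h2]
      subst h3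
      exact (hpath ⟨t, by omega⟩).symm
    · obtain ⟨h1, h2⟩ := hd
      have hs' : s < 13 := by omega
      have ht' : t < 13 := by omega
      rw [dif_pos hs', dif_pos ht',
        show (⟨s, hs'⟩ : Fin 13) = ⟨j - 1, by omega⟩ from Fin.ext h1,
        show (⟨t, ht'⟩ : Fin 13) = ⟨12, by omega⟩ from Fin.ext h2]
      exact e1.symm
    · obtain ⟨h1, h2⟩ := hd
      have hs' : s < 13 := by omega
      have ht' : t < 13 := by omega
      rw [dif_pos hs', dif_pos ht',
        show (⟨s, hs'⟩ : Fin 13) = ⟨12, by omega⟩ from Fin.ext h2,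
        show (⟨t, ht'⟩ : Fin 13) = ⟨j - 1, by omega⟩ from Fin.ext h1]
      exact e1
    · obtain ⟨h1, h2⟩ := hd
      have hs' : s < 13 := by omega
      have ht' : t < 13 := by omega
      rw [dif_pos hs', dif_pos ht',
        show (⟨s, hs'⟩ : Fin 13) = ⟨j, by omega⟩ from Fin.ext h1,
        show (⟨t, ht'⟩ : Fin 13) = ⟨i, by omega⟩ from Fin.ext h2]
      exact e2.symm
    · obtain ⟨h1, h2⟩ := hd
      have hs' : s < 13 := by omega
      have ht' : t < 13 := by omega
      rw [dif_pos hs', dif_pos ht',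
        show (⟨s, hs'⟩ : Fin 13) = ⟨i, by omega⟩ from Fin.ext h2,
        show (⟨t, ht'⟩ : Fin 13) = ⟨j, by omega⟩ from Fin.ext h1]
      exact e2
    · obtain ⟨h1, h2⟩ := hd
      have ht' : t < 13 := by omega
      rw [dif_neg (show ¬ s < 13 by omega), dif_pos ht',
        show (⟨t, ht'⟩ : Fin 13) = ⟨i - 1, by omega⟩ from Fin.ext h2]
      exact hyx
    · obtain ⟨h1, h2⟩ := hd
      have hs' : s < 13 := by omega
      rw [dif_neg (show ¬ t < 13 by omega), dif_pos hs',
        show (⟨s, hs'⟩ : Fin 13) = ⟨i - 1, by omega⟩ from Fin.ext h2]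
      exact hyx.symm
end
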